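/- arXiv:1307.0239 — 10 statements merged into one kernel-verified Lean document; each statement's English description precedes it below -/
import Mathlib

section
/- (Liberality of the test based on the lower p-value.) Let s ≥ 1 and let R_1, …, R_{s+1} be exchangeable real-valued random variables (ties permitted), and let m be an integer with 0 ≤ m ≤ s. Then P(#{i ∈ {1, …, s+1} : R_i < R_1} ≤ m) > m/(s+1). In particular, if α(s+1) = m is an integer with α < 1, then the test φ_lib = 1(p_- ≤ α), where p_- = #{i : R_i < R_1}/(s+1), rejects with probability strictly greater than α under the null hypothesis. -/
open MeasureTheory
open scoped ENNReal

lemma sort_count {n : ℕ} (x : Fin n → ℝ) (k : Fin n) :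
    {i : Fin n | x i < x (Tuple.sort x k)}.ncard ≤ k := by
  set σ := Tuple.sort x
  have hsub : {i : Fin n | x i < x (σ k)} ⊆ ⇑σ '' {i : Fin n | i < k} := by
    intro i hi
    refine ⟨σ.symm i, ?_, by simp⟩
    by_contra hlt
    simp only [Set.mem_setOf_eq, not_lt] at hlt
    have := Tuple.monotone_sort x hlt
    simp only [Function.comp_apply, Equiv.apply_symm_apply] at this
    exact absurd this (not_le.2 (by show x (σ (σ.symm i)) < x (σ k); rw [Equiv.apply_symm_apply]; exact hi))
  calc {i : Fin n | x i < x (σ k)}.ncard ≤ (⇑σ '' {i : Fin n | i < k}).ncard :=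
        Set.ncard_le_ncard hsub (Set.toFinite _)
    _ = ({i : Fin n | i < k}).ncard := Set.ncard_image_of_injective _ σ.injective
    _ = k := by
        simp only [Set.ncard_eq_toFinset_card']
        rw [show ({i : Fin n | i < k}).toFinset = Finset.Iio k by ext; simp]
        simp

lemma key_count {n : ℕ} (x : Fin n → ℝ) (m : ℕ) (hm : m + 1 ≤ n) :
    m + 1 ≤ {j : Fin n | {i : Fin n | x i < x j}.ncard ≤ m}.ncard := by
  set σ := Tuple.sort x
  set g : Fin (m+1) → Fin n := fun k => σ (Fin.castLE hm k)
  have hginj : Function.Injective g := fun a b h => by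
    have := σ.injective h
    exact Fin.castLE_injective hm this
  have hsub : Set.range g ⊆ {j : Fin n | {i : Fin n | x i < x j}.ncard ≤ m} := by
    rintro _ ⟨k, rfl⟩
    exact le_trans (sort_count x (Fin.castLE hm k)) (by simpa using Fin.is_le k)
  calc m + 1 = (Set.range g).ncard := by
        rw [← Set.image_univ, Set.ncard_image_of_injective _ hginj, Set.ncard_univ]; simp
    _ ≤ _ := Set.ncard_le_ncard hsub (Set.toFinite _)

/-- **Liberality of the test based on the lower p-value.**
Let `s ≥ 1` and let `R 0, …, R s` (i.e. `R_1, …, R_{s+1}`) be exchangeable real-valued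
random variables (ties permitted), and let `m` be an integer with `0 ≤ m ≤ s`. Then
`P(#{i : R i < R 0} ≤ m) > m/(s+1)`. In particular, if `α(s+1) = m` is an integer with
`α < 1`, the test `φ_lib = 1(p_- ≤ α)`, where `p_- = #{i : R i < R 0}/(s+1)`, rejects
with probability strictly greater than `α` under the null hypothesis. -/
theorem lower_p_value_test_liberal
    {Ω : Type*} [MeasurableSpace Ω] (P : Measure Ω) [IsProbabilityMeasure P]
    (s : ℕ) (hs : 1 ≤ s) (R : Fin (s + 1) → Ω → ℝ)
    (hmeas : ∀ i, Measurable (R i))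
    (hexch : ∀ σ : Equiv.Perm (Fin (s + 1)),
      Measure.map (fun ω (i : Fin (s + 1)) => R (σ i) ω) P =
        Measure.map (fun ω (i : Fin (s + 1)) => R i ω) P)
    (m : ℕ) (hm : m ≤ s) :
    P {ω | {i : Fin (s + 1) | R i ω < R 0 ω}.ncard ≤ m} > (m : ℝ≥0∞) / (s + 1) := by
  classical
  -- target measurable set in the product space
  set S : Set (Fin (s+1) → ℝ) := {x | {i | x i < x 0}.ncard ≤ m} with hS
  have hgmeas : Measurable fun x : Fin (s+1) → ℝ => {i | x i < x 0}.ncard := by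
    have : (fun x : Fin (s+1) → ℝ => {i | x i < x 0}.ncard) =
        fun x => ∑ i : Fin (s+1), if x i < x 0 then 1 else 0 := by
      funext x
      rw [Set.ncard_eq_toFinset_card']
      rw [Set.toFinset_setOf, Finset.card_filter]
    rw [this]
    exact Finset.measurable_sum _ fun i _ =>
      Measurable.ite (measurableSet_lt (measurable_pi_apply i) (measurable_pi_apply 0))
        measurable_const measurable_const
  have hSmeas : MeasurableSet S :=
    hgmeas (measurableSet_Iic (a := m) : MeasurableSet {k : ℕ | k ≤ m})
  -- events
  set A : Fin (s+1) → Set Ω := fun j => {ω | {i : Fin (s+1) | R i ω < R j ω}.ncard ≤ m} with hA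
  have hjoint : ∀ σ : Equiv.Perm (Fin (s+1)), Measurable (fun ω (i : Fin (s+1)) => R (σ i) ω) :=
    fun σ => measurable_pi_lambda _ fun i => hmeas (σ i)
  have hApre : ∀ j : Fin (s+1), A j = (fun ω (i : Fin (s+1)) => R ((Equiv.swap 0 j) i) ω) ⁻¹' S := by
    intro j
    ext ω
    simp only [hA, hS, Set.mem_preimage, Set.mem_setOf_eq]
    have h0 : (Equiv.swap (0 : Fin (s+1)) j) 0 = j := Equiv.swap_apply_left 0 j
    rw [h0]
    have : {i : Fin (s+1) | R ((Equiv.swap 0 j) i) ω < R j ω}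
        = ⇑(Equiv.swap 0 j).symm '' {i : Fin (s+1) | R i ω < R j ω} := by
      ext i
      simp only [Set.mem_setOf_eq, Set.mem_image]
      constructor
      · intro h; exact ⟨(Equiv.swap 0 j) i, h, Equiv.symm_apply_apply _ _⟩
      · rintro ⟨i', h, rfl⟩; simpa using h
    rw [this, Set.ncard_image_of_injective _ (Equiv.swap 0 j).symm.injective]
  have hPj : ∀ j : Fin (s+1), P (A j) = P (A 0) := by
    intro j
    have h0 : A 0 = (fun ω (i : Fin (s+1)) => R i ω) ⁻¹' S := by
      rw [hApre 0]
      simp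
    rw [hApre j, h0,
      ← Measure.map_apply (hjoint (Equiv.swap 0 j)) hSmeas,
      ← Measure.map_apply (measurable_pi_lambda _ fun i => hmeas i) hSmeas,
      hexch (Equiv.swap 0 j)]
  have hAmeas : ∀ j : Fin (s+1), MeasurableSet (A j) := by
    intro j
    rw [hApre j]
    exact (hjoint (Equiv.swap 0 j)) hSmeas
  -- pointwise count
  have hpt : ∀ ω, (m + 1 : ℝ≥0∞) ≤ ∑ j : Fin (s+1), (A j).indicator (1 : Ω → ℝ≥0∞) ω := by
    intro ω
    have hkey := key_count (fun i => R i ω) m (by omega)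
    have : (∑ j : Fin (s+1), (A j).indicator (1 : Ω → ℝ≥0∞) ω)
        = ({j : Fin (s+1) | {i : Fin (s+1) | R i ω < R j ω}.ncard ≤ m}.ncard : ℝ≥0∞) := by
      rw [Set.ncard_eq_toFinset_card', Set.toFinset_setOf, Finset.card_filter]
      push_cast
      refine Finset.sum_congr rfl fun j _ => ?_
      by_cases h : ω ∈ A j
      · rw [Set.indicator_of_mem h]
        simp only [hA, Set.mem_setOf_eq] at h
        simp [h]
      · rw [Set.indicator_of_notMem h]
        simp only [hA, Set.mem_setOf_eq] at h
        simp [h]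
    rw [this]
    exact_mod_cast hkey
  -- integrate
  have hsum : (m + 1 : ℝ≥0∞) ≤ ∑ j : Fin (s+1), P (A j) := by
    have h1 : ∑ j : Fin (s+1), P (A j)
        = ∫⁻ ω, ∑ j : Fin (s+1), (A j).indicator (1 : Ω → ℝ≥0∞) ω ∂P := by
      rw [lintegral_finset_sum _ fun j _ => measurable_one.indicator (hAmeas j)]
      refine Finset.sum_congr rfl fun j _ => ?_
      rw [lintegral_indicator_one (hAmeas j)]
    have h2 : (m + 1 : ℝ≥0∞) = ∫⁻ _, (m + 1 : ℝ≥0∞) ∂P := by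
      simp [measure_univ]
    rw [h1, h2]
    exact lintegral_mono fun ω => hpt ω
  have hnsum : ∑ j : Fin (s+1), P (A j) = ((s+1 : ℕ) : ℝ≥0∞) * P (A 0) := by
    rw [Finset.sum_congr rfl fun j _ => hPj j]
    simp [mul_comm]
  rw [hnsum] at hsum
  -- conclude
  have hne : (((s:ℝ≥0∞) + 1)) ≠ 0 := by simp
  have hnt : (((s:ℝ≥0∞) + 1)) ≠ ⊤ := by simp
  have hcast : ((s+1 : ℕ) : ℝ≥0∞) = (s:ℝ≥0∞) + 1 := by push_cast; ring
  rw [hcast] at hsum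
  have hge : ((m : ℝ≥0∞) + 1) / ((s:ℝ≥0∞)+1) ≤ P (A 0) := by
    rw [ENNReal.div_le_iff hne hnt]
    exact hsum.trans_eq (mul_comm _ _)
  have hlt : (m : ℝ≥0∞) / ((s:ℝ≥0∞)+1) < ((m : ℝ≥0∞) + 1) / ((s:ℝ≥0∞)+1) := by
    rw [ENNReal.div_lt_iff (Or.inl hne) (Or.inl hnt), ENNReal.div_mul_cancel hne hnt]
    exact ENNReal.lt_add_right (by simp) one_ne_zero
  exact lt_of_lt_of_le hlt hge
end

section
/- (Conservativeness of the test based on the upper p-value.) Let s ≥ 1 and let R_1, …, R_{s+1} be exchangeable real-valued random variables (ties permitted), and let m be any natural number. Then P(#{i ∈ {1, …, s+1} : R_i ≤ R_1} ≤ m) ≤ m/(s+1). In particular, if α(s+1) = m is an integer, then the test φ_cons = 1(p_+ ≤ α), where p_+ = #{i : R_i ≤ R_1}/(s+1), rejects with probability at most α under the null hypothesis. -/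
open MeasureTheory
open scoped ENNReal

/-- Counting function: number of coordinates `i` with `x i ≤ x j`. -/
private noncomputable def cntN {n : ℕ} (x : Fin n → ℝ) (j : Fin n) : ℕ :=
  (Finset.univ.filter fun i => x i ≤ x j).card

private lemma cntN_meas {n : ℕ} (j : Fin n) :
    Measurable fun x : Fin n → ℝ => cntN x j := by
  have : (fun x : Fin n → ℝ => cntN x j)
      = fun x => ∑ i : Fin n, if x i ≤ x j then 1 else 0 := by
    funext x; simp only [cntN, Finset.card_filter]
  rw [this]
  exact Finset.measurable_sum _ fun i _ =>
    Measurable.ite (measurableSet_le (measurable_pi_apply i) (measurable_pi_apply j))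
      measurable_const measurable_const

/-- Reindexing invariance of the counting function. -/
private lemma cntN_perm {n : ℕ} (x : Fin n → ℝ) (σ : Equiv.Perm (Fin n)) (j : Fin n) :
    cntN (fun i => x (σ i)) j = cntN x (σ j) := by
  unfold cntN
  apply Finset.card_bij (fun i _ => σ i)
  · intro a ha
    simp only [Finset.mem_filter, Finset.mem_univ, true_and] at ha ⊢
    exact ha
  · intro a _ b _ h
    exact σ.injective h
  · intro b hb
    refine ⟨σ.symm b, ?_, by simp⟩
    simp only [Finset.mem_filter, Finset.mem_univ, true_and] at hb ⊢
    simpa using hb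

/-- Combinatorial key lemma: at most `m` indices `j` can have `cntN x j ≤ m`. -/
private lemma cntN_card_le {n : ℕ} (x : Fin n → ℝ) (m : ℕ) :
    (Finset.univ.filter fun j => cntN x j ≤ m).card ≤ m := by
  classical
  set S := Finset.univ.filter fun j : Fin n => cntN x j ≤ m with hS
  rcases S.eq_empty_or_nonempty with h | h
  · simp [h]
  · obtain ⟨j, hjS, hjmax⟩ := S.exists_max_image x h
    have hsub : S ⊆ Finset.univ.filter fun i => x i ≤ x j := fun k hk =>
      Finset.mem_filter.mpr ⟨Finset.mem_univ _, hjmax k hk⟩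
    calc S.card ≤ (Finset.univ.filter fun i => x i ≤ x j).card := Finset.card_le_card hsub
      _ ≤ m := (Finset.mem_filter.mp hjS).2

/-- **Conservativeness of the test based on the upper p-value.**
Let `s ≥ 1` and let `R 0, …, R s` (i.e. `R_1, …, R_{s+1}`) be exchangeable real-valued
random variables (ties permitted), and let `m` be any natural number. Then
`P(#{i : R i ≤ R 0} ≤ m) ≤ m/(s+1)`. In particular, if `α(s+1) = m` is an integer, the
test `φ_cons = 1(p_+ ≤ α)`, where `p_+ = #{i : R i ≤ R 0}/(s+1)`, rejects with
probability at most `α` under the null hypothesis. -/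
theorem upper_p_value_test_conservative
    {Ω : Type*} [MeasurableSpace Ω] (P : Measure Ω) [IsProbabilityMeasure P]
    (s : ℕ) (hs : 1 ≤ s) (R : Fin (s + 1) → Ω → ℝ)
    (hmeas : ∀ i, Measurable (R i))
    (hexch : ∀ σ : Equiv.Perm (Fin (s + 1)),
      Measure.map (fun ω (i : Fin (s + 1)) => R (σ i) ω) P =
        Measure.map (fun ω (i : Fin (s + 1)) => R i ω) P)
    (m : ℕ) :
    P {ω | {i : Fin (s + 1) | R i ω ≤ R 0 ω}.ncard ≤ m} ≤ (m : ℝ≥0∞) / (s + 1) := by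
  classical
  set T : Ω → (Fin (s + 1) → ℝ) := fun ω i => R i ω with hT
  have hTmeas : Measurable T := measurable_pi_lambda _ fun i => hmeas i
  set B : Fin (s + 1) → Set (Fin (s + 1) → ℝ) := fun j => {x | cntN x j ≤ m} with hB
  have hBmeas : ∀ j, MeasurableSet (B j) := fun j =>
    (cntN_meas j) (measurableSet_le measurable_id measurable_const)
  set E : Fin (s + 1) → Set Ω := fun j => T ⁻¹' B j with hE
  have hEmeas : ∀ j, MeasurableSet (E j) := fun j => hTmeas (hBmeas j)
  -- goal set equals E 0
  have hgoal : {ω | {i : Fin (s + 1) | R i ω ≤ R 0 ω}.ncard ≤ m} = E 0 := by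
    ext ω
    simp only [hE, hB, hT, Set.mem_setOf_eq, Set.mem_preimage, cntN]
    rw [Set.ncard_eq_toFinset_card', Set.toFinset_setOf]
  -- equal probabilities
  have hPeq : ∀ j, P (E j) = P (E 0) := by
    intro j
    set σ := Equiv.swap (0 : Fin (s + 1)) j with hσ
    have hσ0 : σ 0 = j := Equiv.swap_apply_left 0 j
    have hTσmeas : Measurable fun ω (i : Fin (s + 1)) => R (σ i) ω :=
      measurable_pi_lambda _ fun i => hmeas (σ i)
    have hpre : (fun ω (i : Fin (s + 1)) => R (σ i) ω) ⁻¹' B 0 = E j := by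
      ext ω
      have hcp : cntN (fun i => R (σ i) ω) 0 = cntN (fun k => R k ω) (σ 0) :=
        cntN_perm (fun k => R k ω) σ 0
      simp only [Set.mem_preimage, hB, Set.mem_setOf_eq, hE, hT]
      rw [hcp, hσ0]
    calc P (E j) = P ((fun ω (i : Fin (s + 1)) => R (σ i) ω) ⁻¹' B 0) := by rw [hpre]
      _ = Measure.map (fun ω (i : Fin (s + 1)) => R (σ i) ω) P (B 0) :=
          (Measure.map_apply hTσmeas (hBmeas 0)).symm
      _ = Measure.map T P (B 0) := by rw [hexch σ]
      _ = P (E 0) := Measure.map_apply hTmeas (hBmeas 0)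
  -- sum of probabilities bound
  have hsum : ∑ j : Fin (s + 1), P (E j) ≤ m := by
    calc ∑ j : Fin (s + 1), P (E j)
        = ∑ j : Fin (s + 1), ∫⁻ ω, (E j).indicator 1 ω ∂P :=
          Finset.sum_congr rfl fun j _ => (lintegral_indicator_one (hEmeas j)).symm
      _ = ∫⁻ ω, ∑ j : Fin (s + 1), (E j).indicator 1 ω ∂P := by
          rw [lintegral_finset_sum]
          exact fun j _ => (measurable_const.indicator (hEmeas j))
      _ ≤ ∫⁻ _, (m : ℝ≥0∞) ∂P := by
          apply lintegral_mono
          intro ω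
          dsimp only
          have hpt : ∑ j : Fin (s + 1), (E j).indicator 1 ω
              = ((Finset.univ.filter fun j : Fin (s + 1) => cntN (T ω) j ≤ m).card : ℝ≥0∞) := by
            rw [Finset.card_filter]
            push_cast
            apply Finset.sum_congr rfl
            intro j _
            by_cases h : ω ∈ E j
            · have hc : cntN (T ω) j ≤ m := h
              simp [Set.indicator_of_mem h, hc]
            · have hc : ¬ cntN (T ω) j ≤ m := h
              simp [Set.indicator_of_notMem h, hc]
          rw [hpt]
          exact_mod_cast Nat.cast_le.mpr (cntN_card_le (T ω) m)
      _ = (m : ℝ≥0∞) := by simp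
  -- conclude
  have hconst : ∑ j : Fin (s + 1), P (E j) = ((s : ℝ≥0∞) + 1) * P (E 0) := by
    rw [Finset.sum_congr rfl fun j _ => hPeq j]
    simp [Finset.sum_const, mul_comm]

  rw [hgoal]
  rw [ENNReal.le_div_iff_mul_le (Or.inl (by simp)) (Or.inl (by simp))]
  calc P (E 0) * ((s : ℝ≥0∞) + 1) = ((s : ℝ≥0∞) + 1) * P (E 0) := mul_comm _ _
    _ ≤ m := hconst ▸ hsum
end

section
/- (Envelope characterization of the extreme rank.) For every i ∈ {1, …, s+1}, the extreme rank satisfies R_i = max{k ≥ 1 : T_low^(k)(r) ≤ T_i(r) ≤ T_upp^(k)(r) for all r ∈ I}, i.e., R_i is the largest k for which the curve T_i lies entirely within the k-th envelope. -/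
open Finset

/-- The upward pointwise rank `R_i^↑(r) = #{j : T_j(r) ≤ T_i(r)}`. -/
noncomputable def upRank {s : ℕ} {ι : Type*} (T : Fin (s + 1) → ι → ℝ) (i : Fin (s + 1)) (r : ι) : ℕ :=
  {j : Fin (s + 1) | T j r ≤ T i r}.ncard

/-- The downward pointwise rank `R_i^↓(r) = #{j : T_j(r) ≥ T_i(r)}`. -/
noncomputable def downRank {s : ℕ} {ι : Type*} (T : Fin (s + 1) → ι → ℝ) (i : Fin (s + 1)) (r : ι) : ℕ :=
  {j : Fin (s + 1) | T i r ≤ T j r}.ncard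

/-- The two-sided pointwise rank `R_i^*(r) = min(R_i^↑(r), R_i^↓(r))`. -/
noncomputable def twoSidedRank {s : ℕ} {ι : Type*} (T : Fin (s + 1) → ι → ℝ) (i : Fin (s + 1)) (r : ι) : ℕ :=
  min (upRank T i r) (downRank T i r)

/-- The extreme rank `R_i = min_{r ∈ I} R_i^*(r)`. -/
noncomputable def extremeRank {s : ℕ} {ι : Type*} [Fintype ι] [Nonempty ι]
    (T : Fin (s + 1) → ι → ℝ) (i : Fin (s + 1)) : ℕ :=
  univ.inf' univ_nonempty (fun r => twoSidedRank T i r)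

/-- The lower bound of the `k`-th envelope: the `k`-th smallest of `T_1(r), …, T_{s+1}(r)`. -/
noncomputable def envLow {s : ℕ} {ι : Type*} (T : Fin (s + 1) → ι → ℝ) (k : ℕ) (r : ι) : ℝ :=
  ((univ.image (fun i => T i r)).sort (· ≤ ·)).getD (k - 1) 0

/-- The upper bound of the `k`-th envelope: the `k`-th largest of `T_1(r), …, T_{s+1}(r)`. -/
noncomputable def envUpp {s : ℕ} {ι : Type*} (T : Fin (s + 1) → ι → ℝ) (k : ℕ) (r : ι) : ℝ :=
  ((univ.image (fun i => T i r)).sort (· ≤ ·)).getD (s + 1 - k) 0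

lemma rank_env {s : ℕ} {ι : Type*} (T : Fin (s + 1) → ι → ℝ) (i : Fin (s + 1)) (r : ι)
    (hnt : ∀ j j' : Fin (s+1), j ≠ j' → T j r ≠ T j' r) {k : ℕ} (hk1 : 1 ≤ k) (hk2 : k ≤ s+1) :
    (envLow T k r ≤ T i r ↔ k ≤ upRank T i r) ∧ (T i r ≤ envUpp T k r ↔ k ≤ downRank T i r) := by
  have hinj : Function.Injective (fun j => T j r) := by
    intro a b h
    by_contra hne
    exact hnt a b hne h
  set S := univ.image (fun j => T j r) with hS
  have hcard : S.card = s + 1 := by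
    rw [hS, card_image_of_injective _ hinj, card_univ, Fintype.card_fin]
  set L := S.sort (· ≤ ·) with hL
  have hlen : L.length = s + 1 := by rw [hL, Finset.length_sort, hcard]
  have hmono : StrictMono (fun m : Fin L.length => L.get m) := by
    intro a b hab
    exact (S.sortedLT_sort).pairwise.rel_get_of_lt hab
  have hmem : T i r ∈ L := (Finset.mem_sort _).2 (mem_image_of_mem _ (mem_univ i))
  obtain ⟨p, hp⟩ := List.mem_iff_get.1 hmem
  -- filter characterizations
  have hfilt_le : S.filter (· ≤ T i r) = (Finset.Iic p).image (fun m => L.get m) := by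
    ext y
    simp only [mem_filter, mem_image, Finset.mem_Iic]
    constructor
    · rintro ⟨hyS, hyle⟩
      obtain ⟨m, hm⟩ := List.mem_iff_get.1 ((Finset.mem_sort (α := ℝ) (· ≤ ·)).2 hyS)
      refine ⟨m, ?_, hm⟩
      rw [← hp] at hyle
      rw [← hm] at hyle
      exact hmono.le_iff_le.1 hyle
    · rintro ⟨m, hmp, rfl⟩
      exact ⟨(Finset.mem_sort (α := ℝ) (· ≤ ·)).1 (List.mem_iff_get.2 ⟨m, rfl⟩),
        by rw [← hp]; exact hmono.monotone hmp⟩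
  have hfilt_ge : S.filter (T i r ≤ ·) = (Finset.Ici p).image (fun m => L.get m) := by
    ext y
    simp only [mem_filter, mem_image, Finset.mem_Ici]
    constructor
    · rintro ⟨hyS, hyle⟩
      obtain ⟨m, hm⟩ := List.mem_iff_get.1 ((Finset.mem_sort (α := ℝ) (· ≤ ·)).2 hyS)
      refine ⟨m, ?_, hm⟩
      rw [← hp] at hyle
      rw [← hm] at hyle
      exact hmono.le_iff_le.1 hyle
    · rintro ⟨m, hmp, rfl⟩
      exact ⟨(Finset.mem_sort (α := ℝ) (· ≤ ·)).1 (List.mem_iff_get.2 ⟨m, rfl⟩),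
        by rw [← hp]; exact hmono.monotone hmp⟩
  have hup : upRank T i r = p.val + 1 := by
    have h1 : {j : Fin (s+1) | T j r ≤ T i r} = ↑(univ.filter fun j => T j r ≤ T i r) := by
      ext j; simp
    have him := Finset.filter_image (s := (univ : Finset (Fin (s+1))))
      (f := fun j => T j r) (p := fun y => y ≤ T i r)
    rw [upRank, h1, Set.ncard_coe_finset,
      ← card_image_of_injective (univ.filter fun j => T j r ≤ T i r) hinj,
      ← him, ← hS, hfilt_le, card_image_of_injective _ hmono.injective, Fin.card_Iic]
  have hdown : downRank T i r = s + 1 - p.val := by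
    have h1 : {j : Fin (s+1) | T i r ≤ T j r} = ↑(univ.filter fun j => T i r ≤ T j r) := by
      ext j; simp
    have him := Finset.filter_image (s := (univ : Finset (Fin (s+1))))
      (f := fun j => T j r) (p := fun y => T i r ≤ y)
    rw [downRank, h1, Set.ncard_coe_finset,
      ← card_image_of_injective (univ.filter fun j => T i r ≤ T j r) hinj,
      ← him, ← hS, hfilt_ge, card_image_of_injective _ hmono.injective, Fin.card_Ici]
    omega
  have hkl : k - 1 < L.length := by omega
  have hku : s + 1 - k < L.length := by omega
  have hps : p.val < s + 1 := by have := p.isLt; omega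
  constructor
  · rw [envLow, ← hS, ← hL, List.getD_eq_get _ _ ⟨k - 1, hkl⟩, ← hp, hmono.le_iff_le, hup, Fin.le_def]
    simp only [Fin.val_mk]
    omega
  · unfold envUpp
    rw [← hS, ← hL, List.getD_eq_get _ _ ⟨s + 1 - k, hku⟩, ← hp, hmono.le_iff_le, hdown, Fin.le_def]
    simp only [Fin.val_mk]
    omega

lemma rank_bounds {s : ℕ} {ι : Type*} (T : Fin (s + 1) → ι → ℝ) (i : Fin (s + 1)) (r : ι) :
    1 ≤ twoSidedRank T i r ∧ twoSidedRank T i r ≤ s + 1 := by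
  constructor
  · rw [twoSidedRank, le_min_iff]
    constructor
    · rw [upRank]
      have : ({j : Fin (s+1) | T j r ≤ T i r}).Nonempty := ⟨i, by simp⟩
      have hpos := Set.ncard_pos (Set.toFinite _) |>.2 this
      omega
    · rw [downRank]
      have : ({j : Fin (s+1) | T i r ≤ T j r}).Nonempty := ⟨i, by simp⟩
      have hpos := Set.ncard_pos (Set.toFinite _) |>.2 this
      omega
  · calc twoSidedRank T i r ≤ upRank T i r := min_le_left _ _
      _ ≤ (Set.univ : Set (Fin (s+1))).ncard :=
          Set.ncard_le_ncard (Set.subset_univ _) (Set.toFinite _)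
      _ = s + 1 := by rw [Set.ncard_univ]; simp

/-- **Envelope characterization of the extreme rank.**
For curves `T_1, …, T_{s+1}` on a nonempty finite set `I` with no pointwise ties, the
extreme rank satisfies `R_i = max{k ≥ 1 : T_low^(k)(r) ≤ T_i(r) ≤ T_upp^(k)(r) ∀ r ∈ I}`,
i.e. `R_i` is the largest `k` for which the curve `T_i` lies entirely within the `k`-th
envelope (the `k`-th envelope being defined for `1 ≤ k ≤ s+1`). -/
theorem extremeRank_eq_max_envelope
    {s : ℕ} (hs : 1 ≤ s) {ι : Type*} [Fintype ι] [Nonempty ι]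
    (T : Fin (s + 1) → ι → ℝ)
    (hnoties : ∀ r : ι, ∀ i j : Fin (s + 1), i ≠ j → T i r ≠ T j r)
    (i : Fin (s + 1)) :
    extremeRank T i =
      sSup {k : ℕ | 1 ≤ k ∧ k ≤ s + 1 ∧
        ∀ r : ι, envLow T k r ≤ T i r ∧ T i r ≤ envUpp T k r} := by
  have key : ∀ k : ℕ, 1 ≤ k → k ≤ s + 1 →
      ((∀ r : ι, envLow T k r ≤ T i r ∧ T i r ≤ envUpp T k r) ↔ k ≤ extremeRank T i) := by
    intro k hk1 hk2
    rw [extremeRank, Finset.le_inf'_iff]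
    constructor
    · intro h r _
      obtain ⟨h1, h2⟩ := rank_env T i r (hnoties r) hk1 hk2
      rw [twoSidedRank, le_min_iff]
      exact ⟨h1.1 (h r).1, h2.1 (h r).2⟩
    · intro h r
      obtain ⟨h1, h2⟩ := rank_env T i r (hnoties r) hk1 hk2
      have := h r (mem_univ r)
      rw [twoSidedRank, le_min_iff] at this
      exact ⟨h1.2 this.1, h2.2 this.2⟩
  have hE1 : 1 ≤ extremeRank T i := by
    rw [extremeRank, Finset.le_inf'_iff]
    exact fun r _ => (rank_bounds T i r).1
  have hE2 : extremeRank T i ≤ s + 1 := by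
    obtain ⟨r⟩ := ‹Nonempty ι›
    exact le_trans (Finset.inf'_le _ (mem_univ r)) (rank_bounds T i r).2
  have hset : {k : ℕ | 1 ≤ k ∧ k ≤ s + 1 ∧
      ∀ r : ι, envLow T k r ≤ T i r ∧ T i r ≤ envUpp T k r} = Set.Icc 1 (extremeRank T i) := by
    ext k
    simp only [Set.mem_setOf_eq, Set.mem_Icc]
    constructor
    · rintro ⟨h1, h2, h3⟩
      exact ⟨h1, (key k h1 h2).1 h3⟩
    · rintro ⟨h1, hk⟩
      exact ⟨h1, hk.trans hE2, (key k h1 (hk.trans hE2)).2 hk⟩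
  rw [hset, csSup_Icc hE1]
end

section
/- (Rank envelope test, rejection case.) There exists r ∈ I with T_1(r) < T_low^(k_α)(r) or T_1(r) > T_upp^(k_α)(r) (i.e., the observed curve exits the global rank envelope strictly) if and only if p_+ ≤ α. -/
open Finset

private lemma ncard_eq_filter_card {n : ℕ} (P : Fin n → Prop) [DecidablePred P] :
    {i : Fin n | P i}.ncard = (univ.filter P).card := by
  rw [Set.ncard_eq_toFinset_card']
  congr 1
  ext i
  simp

/-- Pointwise characterization: the observed curve exits the `k`-th envelope strictly at `r`
iff its two-sided pointwise rank at `r` is `< k`. -/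
private lemma exit_iff {s : ℕ} {ι : Type*} (T : Fin (s + 1) → ι → ℝ) (r : ι)
    (hr : Function.Injective fun i => T i r) {k : ℕ} (hk1 : 1 ≤ k) (hk2 : k ≤ s + 1) :
    (T 0 r < envLow T k r ∨ envUpp T k r < T 0 r) ↔ twoSidedRank T 0 r < k := by
  classical
  set A : Finset ℝ := univ.image (fun i => T i r) with hAdef
  have hA : A.card = s + 1 := by
    rw [hAdef, card_image_of_injective _ hr, card_univ, Fintype.card_fin]
  set g := A.orderEmbOfFin hA with hg
  have himg : univ.image (fun j => g j) = A := by
    apply Finset.coe_injective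
    rw [coe_image, coe_univ, Set.image_univ]
    exact A.range_orderEmbOfFin hA
  have hmemA : T 0 r ∈ A := by
    rw [hAdef]; exact mem_image_of_mem _ (mem_univ 0)
  obtain ⟨idx, hidx⟩ : ∃ idx : Fin (s + 1), g idx = T 0 r := by
    have : T 0 r ∈ univ.image (fun j => g j) := himg ▸ hmemA
    simpa using this
  have hsortlen : (A.sort (· ≤ ·)).length = s + 1 := by rw [length_sort, hA]
  -- envelope values as values of g
  have hlow : envLow T k r = g ⟨k - 1, by omega⟩ := by
    rw [envLow, ← hAdef, List.getD_eq_getElem _ _ (by rw [hsortlen]; omega)]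
    simp [hg, orderEmbOfFin_apply]
  have hupp : envUpp T k r = g ⟨s + 1 - k, by omega⟩ := by
    rw [envUpp, ← hAdef, List.getD_eq_getElem _ _ (by rw [hsortlen]; omega)]
    simp [hg, orderEmbOfFin_apply]
  -- card computations via images in ℝ
  have hrange : Set.range (fun j => g j) = (↑A : Set ℝ) := A.range_orderEmbOfFin hA
  have hup : upRank T 0 r = (idx : ℕ) + 1 := by
    have e1 : (fun i => T i r) '' {j : Fin (s + 1) | T j r ≤ T 0 r} =
        (↑A : Set ℝ) ∩ Set.Iic (T 0 r) := by
      ext x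
      constructor
      · rintro ⟨j, hj, rfl⟩
        exact ⟨by rw [hAdef]; simp [Finset.mem_coe], hj⟩
      · rintro ⟨hxA, hx⟩
        rw [hAdef, Finset.mem_coe, Finset.mem_image] at hxA
        obtain ⟨j, -, rfl⟩ := hxA
        exact ⟨j, hx, rfl⟩
    have e2 : (fun j => g j) '' Set.Iic idx = (↑A : Set ℝ) ∩ Set.Iic (T 0 r) := by
      ext x
      constructor
      · rintro ⟨j, hj, rfl⟩
        refine ⟨by rw [← hrange]; exact Set.mem_range_self j, ?_⟩
        rw [Set.mem_Iic, ← hidx]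
        exact g.monotone hj
      · rintro ⟨hxA, hx⟩
        rw [← hrange] at hxA
        obtain ⟨j, rfl⟩ := hxA
        refine ⟨j, ?_, rfl⟩
        rw [Set.mem_Iic, ← g.le_iff_le, hidx]
        exact hx
    have := (Set.ncard_image_of_injective {j : Fin (s + 1) | T j r ≤ T 0 r} hr).symm
    rw [upRank, this, e1, ← e2, Set.ncard_image_of_injective _ g.injective,
      ← Finset.coe_Iic, Set.ncard_coe_finset, Fin.card_Iic]
  have hdown : downRank T 0 r = s + 1 - (idx : ℕ) := by
    have e1 : (fun i => T i r) '' {j : Fin (s + 1) | T 0 r ≤ T j r} =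
        (↑A : Set ℝ) ∩ Set.Ici (T 0 r) := by
      ext x
      constructor
      · rintro ⟨j, hj, rfl⟩
        exact ⟨by rw [hAdef]; simp [Finset.mem_coe], hj⟩
      · rintro ⟨hxA, hx⟩
        rw [hAdef, Finset.mem_coe, Finset.mem_image] at hxA
        obtain ⟨j, -, rfl⟩ := hxA
        exact ⟨j, hx, rfl⟩
    have e2 : (fun j => g j) '' Set.Ici idx = (↑A : Set ℝ) ∩ Set.Ici (T 0 r) := by
      ext x
      constructor
      · rintro ⟨j, hj, rfl⟩
        refine ⟨by rw [← hrange]; exact Set.mem_range_self j, ?_⟩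
        rw [Set.mem_Ici, ← hidx]
        exact g.monotone hj
      · rintro ⟨hxA, hx⟩
        rw [← hrange] at hxA
        obtain ⟨j, rfl⟩ := hxA
        refine ⟨j, ?_, rfl⟩
        rw [Set.mem_Ici, ← g.le_iff_le, hidx]
        exact hx
    have := (Set.ncard_image_of_injective {j : Fin (s + 1) | T 0 r ≤ T j r} hr).symm
    rw [downRank, this, e1, ← e2, Set.ncard_image_of_injective _ g.injective,
      ← Finset.coe_Ici, Set.ncard_coe_finset, Fin.card_Ici]
  have hidxlt : (idx : ℕ) < s + 1 := idx.isLt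
  rw [twoSidedRank, hup, hdown, hlow, hupp, ← hidx, g.lt_iff_lt, g.lt_iff_lt]
  simp only [Fin.lt_def]
  omega

/-- **Rank envelope test, rejection case.**
There exists `r ∈ I` with `T_1(r) < T_low^(k_α)(r)` or `T_1(r) > T_upp^(k_α)(r)` (the
observed curve exits the global rank envelope strictly) if and only if `p_+ ≤ α`,
where `p_+ = #{i : R_i ≤ R_1}/(s+1)`. -/
theorem rank_envelope_rejection
    {s : ℕ} (hs : 1 ≤ s) {ι : Type*} [Fintype ι] [Nonempty ι]
    (T : Fin (s + 1) → ι → ℝ)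
    (hnoties : ∀ r : ι, ∀ i j : Fin (s + 1), i ≠ j → T i r ≠ T j r)
    (α : ℝ) (hα0 : 0 ≤ α) (hα1 : α < 1)
    (m : ℕ) (hm : (m : ℝ) = α * (s + 1))
    (kα : ℕ)
    (hkα : kα = sSup {k : ℕ | 1 ≤ k ∧ {i : Fin (s + 1) | extremeRank T i < k}.ncard ≤ m}) :
    (∃ r : ι, T 0 r < envLow T kα r ∨ envUpp T kα r < T 0 r) ↔
      ({i : Fin (s + 1) | extremeRank T i ≤ extremeRank T 0}.ncard : ℝ) / (s + 1) ≤ α := by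
  classical
  have hinj : ∀ r : ι, Function.Injective fun i => T i r := by
    intro r i j hij
    by_contra hne
    exact hnoties r i j hne hij
  -- basic bounds on extreme ranks
  have hR1 : ∀ i, 1 ≤ extremeRank T i := by
    intro i
    apply Finset.le_inf'
    intro r _
    have h1 : 1 ≤ upRank T i r := by
      rw [upRank]
      have : ({j : Fin (s + 1) | T j r ≤ T i r}).Nonempty := ⟨i, show T i r ≤ T i r from le_rfl⟩
      have := (Set.ncard_pos (Set.toFinite _)).mpr this
      omega
    have h2 : 1 ≤ downRank T i r := by
      rw [downRank]
      have : ({j : Fin (s + 1) | T i r ≤ T j r}).Nonempty := ⟨i, show T i r ≤ T i r from le_rfl⟩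
      have := (Set.ncard_pos (Set.toFinite _)).mpr this
      omega
    simp [twoSidedRank]
    omega
  have hRle : ∀ i, extremeRank T i ≤ s + 1 := by
    intro i
    obtain ⟨r⟩ := (inferInstance : Nonempty ι)
    refine le_trans (Finset.inf'_le _ (mem_univ r)) ?_
    have : upRank T i r ≤ s + 1 := by
      rw [upRank, ncard_eq_filter_card]
      calc (univ.filter _).card ≤ (univ : Finset (Fin (s+1))).card := card_filter_le _ _
        _ = s + 1 := by simp
    simp [twoSidedRank]
    omega
  -- m < s + 1
  have hms : m < s + 1 := by
    have : (m : ℝ) < ((s : ℝ) + 1) := by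
      rw [hm]
      have hpos : (0 : ℝ) < (s : ℝ) + 1 := by positivity
      nlinarith
    exact_mod_cast (by push_cast at this ⊢; linarith : (m : ℝ) < ((s + 1 : ℕ) : ℝ))
  set S : Set ℕ := {k : ℕ | 1 ≤ k ∧ {i : Fin (s + 1) | extremeRank T i < k}.ncard ≤ m} with hS
  have hmem1 : (1 : ℕ) ∈ S := by
    constructor
    · exact le_refl 1
    · have : {i : Fin (s + 1) | extremeRank T i < 1} = ∅ := by
        ext i; simp only [Set.mem_setOf_eq, Set.mem_empty_iff_false, iff_false, not_lt]
        exact hR1 i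
      rw [this, Set.ncard_empty]
      exact Nat.zero_le m
  have hbdd : ∀ k ∈ S, k ≤ s + 1 := by
    intro k hk
    by_contra h
    push_neg at h
    have : {i : Fin (s + 1) | extremeRank T i < k} = Set.univ := by
      ext i; simp; exact lt_of_le_of_lt (hRle i) h
    have hcard : {i : Fin (s + 1) | extremeRank T i < k}.ncard = s + 1 := by
      rw [this, Set.ncard_univ, Nat.card_eq_fintype_card, Fintype.card_fin]
    have := hk.2
    omega
  have hSbdd : BddAbove S := ⟨s + 1, fun k hk => hbdd k hk⟩
  have hkmem : kα ∈ S := hkα ▸ Nat.sSup_mem ⟨1, hmem1⟩ hSbdd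
  have hk1 : 1 ≤ kα := hkmem.1
  have hk2 : kα ≤ s + 1 := hbdd kα hkmem
  -- exit iff extremeRank T 0 < kα
  have step1 : (∃ r : ι, T 0 r < envLow T kα r ∨ envUpp T kα r < T 0 r) ↔
      extremeRank T 0 < kα := by
    rw [extremeRank, Finset.inf'_lt_iff]
    constructor
    · rintro ⟨r, hr⟩
      exact ⟨r, mem_univ r, (exit_iff T r (hinj r) hk1 hk2).mp hr⟩
    · rintro ⟨r, _, hr⟩
      exact ⟨r, (exit_iff T r (hinj r) hk1 hk2).mpr hr⟩
  -- extremeRank T 0 < kα iff card ≤ m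
  have hsetEq : {i : Fin (s + 1) | extremeRank T i ≤ extremeRank T 0} =
      {i : Fin (s + 1) | extremeRank T i < extremeRank T 0 + 1} := by
    ext i; simp [Nat.lt_succ_iff]
  have step2 : extremeRank T 0 < kα ↔
      {i : Fin (s + 1) | extremeRank T i ≤ extremeRank T 0}.ncard ≤ m := by
    rw [hsetEq]
    constructor
    · intro h
      refine le_trans (Set.ncard_le_ncard ?_ (Set.toFinite _)) hkmem.2
      intro i hi
      simp only [Set.mem_setOf_eq] at hi ⊢
      omega
    · intro h
      have : extremeRank T 0 + 1 ∈ S := ⟨by omega, h⟩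
      have := le_csSup hSbdd this
      rw [← hkα] at this
      omega
  rw [step1, step2]
  -- card ≤ m iff card / (s+1) ≤ α
  set c : ℕ := {i : Fin (s + 1) | extremeRank T i ≤ extremeRank T 0}.ncard
  have hpos : (0 : ℝ) < (s : ℝ) + 1 := by positivity
  rw [div_le_iff₀ hpos]
  constructor
  · intro h
    calc (c : ℝ) ≤ (m : ℝ) := by exact_mod_cast h
      _ = α * ((s : ℝ) + 1) := hm
  · intro h
    have : (c : ℝ) ≤ (m : ℝ) := by rw [hm]; exact h
    exact_mod_cast this
end

section
/- (Rank envelope test, acceptance case.) The observed curve lies strictly inside the global rank envelope, i.e., T_low^(k_α)(r) < T_1(r) < T_upp^(k_α)(r) for all r ∈ I, if and only if p_- > α. -/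
open Finset

lemma env_iff {s : ℕ} {ι : Type*} (T : Fin (s + 1) → ι → ℝ) (r : ι)
    (hinj : Function.Injective fun i => T i r) (k : ℕ) (hk1 : 1 ≤ k) (hk2 : k ≤ s + 1) :
    (envLow T k r < T 0 r ∧ T 0 r < envUpp T k r) ↔ k < twoSidedRank T 0 r := by
  classical
  have hF : (univ.image fun i => T i r).card = s + 1 := by
    rw [Finset.card_image_of_injective _ hinj, card_univ, Fintype.card_fin]
  set e := (univ.image fun i => T i r).orderEmbOfFin hF with he
  have hrange : ∀ j, ∃ p, e p = T j r := by
    intro j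
    have h1 : T j r ∈ (↑(univ.image fun i => T i r) : Set ℝ) := by
      simp only [Finset.coe_image, Set.mem_image, Finset.mem_coe, Finset.mem_univ, true_and,
        Finset.coe_univ, Set.image_univ, Set.mem_range]
      exact ⟨j, rfl⟩
    rw [← Finset.range_orderEmbOfFin _ hF] at h1
    exact h1
  choose σ hσ using hrange
  have hσinj : Function.Injective σ := by
    intro a b h
    apply hinj
    show T a r = T b r
    rw [← hσ a, ← hσ b, h]
  have hσsurj : Function.Surjective σ := Finite.injective_iff_surjective.mp hσinj
  set q := σ 0 with hqdef
  have hq : e q = T 0 r := hσ 0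
  have hup : upRank T 0 r = (q : ℕ) + 1 := by
    rw [upRank, Set.ncard_eq_toFinset_card']
    have h1 : {j : Fin (s + 1) | T j r ≤ T 0 r}.toFinset = univ.filter fun j => σ j ≤ q := by
      ext j
      simp only [Set.mem_toFinset, Set.mem_setOf_eq, Finset.mem_filter, Finset.mem_univ, true_and]
      rw [← hq, show T j r = e (σ j) from (hσ j).symm]
      exact e.le_iff_le
    rw [h1, ← Finset.card_image_of_injective _ hσinj]
    have h2 : (univ.filter fun j => σ j ≤ q).image σ = Finset.Iic q := by
      ext p
      simp only [Finset.mem_image, Finset.mem_filter, Finset.mem_univ, true_and, Finset.mem_Iic]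
      constructor
      · rintro ⟨j, hj, rfl⟩; exact hj
      · intro hp; obtain ⟨j, rfl⟩ := hσsurj p; exact ⟨j, hp, rfl⟩
    rw [h2, Fin.card_Iic]
  have hdown : downRank T 0 r = (s + 1) - (q : ℕ) := by
    rw [downRank, Set.ncard_eq_toFinset_card']
    have h1 : {j : Fin (s + 1) | T 0 r ≤ T j r}.toFinset = univ.filter fun j => q ≤ σ j := by
      ext j
      simp only [Set.mem_toFinset, Set.mem_setOf_eq, Finset.mem_filter, Finset.mem_univ, true_and]
      rw [← hq, show T j r = e (σ j) from (hσ j).symm]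
      exact e.le_iff_le
    rw [h1, ← Finset.card_image_of_injective _ hσinj]
    have h2 : (univ.filter fun j => q ≤ σ j).image σ = Finset.Ici q := by
      ext p
      simp only [Finset.mem_image, Finset.mem_filter, Finset.mem_univ, true_and, Finset.mem_Ici]
      constructor
      · rintro ⟨j, hj, rfl⟩; exact hj
      · intro hp; obtain ⟨j, rfl⟩ := hσsurj p; exact ⟨j, hp, rfl⟩
    rw [h2, Fin.card_Ici]
  have hlen : ((univ.image fun i => T i r).sort (· ≤ ·)).length = s + 1 := by
    rw [Finset.length_sort, hF]
  have hlow : envLow T k r = e ⟨k - 1, by omega⟩ := by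
    rw [envLow, Finset.orderEmbOfFin_apply]
    exact List.getD_eq_getElem _ _ (by rw [hlen]; omega)
  have hupp : envUpp T k r = e ⟨s + 1 - k, by omega⟩ := by
    rw [envUpp, Finset.orderEmbOfFin_apply]
    exact List.getD_eq_getElem _ _ (by rw [hlen]; omega)
  rw [twoSidedRank, lt_min_iff, hup, hdown, hlow, hupp, ← hq, e.lt_iff_lt, e.lt_iff_lt,
    Fin.lt_def, Fin.lt_def]
  simp only [Fin.val_mk]
  have := q.isLt
  omega

lemma one_le_extremeRank {s : ℕ} {ι : Type*} [Fintype ι] [Nonempty ι]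
    (T : Fin (s + 1) → ι → ℝ) (i : Fin (s + 1)) : 1 ≤ extremeRank T i := by
  rw [extremeRank, Finset.le_inf'_iff]
  intro r _
  rw [twoSidedRank, le_min_iff]
  constructor
  · exact (Set.ncard_pos (Set.toFinite _)).mpr ⟨i, by simp⟩
  · exact (Set.ncard_pos (Set.toFinite _)).mpr ⟨i, by simp⟩

lemma extremeRank_le {s : ℕ} {ι : Type*} [Fintype ι] [Nonempty ι]
    (T : Fin (s + 1) → ι → ℝ) (i : Fin (s + 1)) : extremeRank T i ≤ s + 1 := by
  rw [extremeRank]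
  refine le_trans (Finset.inf'_le _ (mem_univ (Classical.arbitrary ι))) ?_
  rw [twoSidedRank]
  refine le_trans (min_le_left _ _) ?_
  rw [upRank]
  refine le_trans (Set.ncard_le_ncard (Set.subset_univ _) (Set.toFinite _)) ?_
  rw [Set.ncard_univ]
  simp

/-- **Rank envelope test, acceptance case.**
The observed curve lies strictly inside the global rank envelope, i.e.
`T_low^(k_α)(r) < T_1(r) < T_upp^(k_α)(r)` for all `r ∈ I`, if and only if `p_- > α`,
where `p_- = #{i : R_i < R_1}/(s+1)`. -/
theorem rank_envelope_acceptance
    {s : ℕ} (hs : 1 ≤ s) {ι : Type*} [Fintype ι] [Nonempty ι]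
    (T : Fin (s + 1) → ι → ℝ)
    (hnoties : ∀ r : ι, ∀ i j : Fin (s + 1), i ≠ j → T i r ≠ T j r)
    (α : ℝ) (hα0 : 0 ≤ α) (hα1 : α < 1)
    (m : ℕ) (hm : (m : ℝ) = α * (s + 1))
    (kα : ℕ)
    (hkα : kα = sSup {k : ℕ | 1 ≤ k ∧ {i : Fin (s + 1) | extremeRank T i < k}.ncard ≤ m}) :
    (∀ r : ι, envLow T kα r < T 0 r ∧ T 0 r < envUpp T kα r) ↔
      α < ({i : Fin (s + 1) | extremeRank T i < extremeRank T 0}.ncard : ℝ) / (s + 1) := by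
  classical
  have hinj : ∀ r : ι, Function.Injective fun i => T i r := by
    intro r a b h
    by_contra hne
    exact hnoties r a b hne h
  set count : ℕ → ℕ := fun k => {i : Fin (s + 1) | extremeRank T i < k}.ncard with hcount
  have hmono : Monotone count := by
    intro a b hab
    exact Set.ncard_le_ncard (fun i hi => lt_of_lt_of_le hi hab) (Set.toFinite _)
  have hsp : (0 : ℝ) < (s : ℝ) + 1 := by positivity
  have hm1 : m < s + 1 := by
    have h1 : (m : ℝ) < (s : ℝ) + 1 := by
      rw [hm]; nlinarith
    exact_mod_cast h1
  set S : Set ℕ := {k : ℕ | 1 ≤ k ∧ count k ≤ m} with hS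
  have h1S : 1 ∈ S := by
    refine ⟨le_refl 1, ?_⟩
    have h0 : {i : Fin (s + 1) | extremeRank T i < 1} = ∅ := by
      ext i
      simp only [Set.mem_setOf_eq, Set.mem_empty_iff_false, iff_false, not_lt]
      exact one_le_extremeRank T i
    show {i : Fin (s + 1) | extremeRank T i < 1}.ncard ≤ m
    rw [h0, Set.ncard_empty]
    exact Nat.zero_le m
  have hSle : ∀ k ∈ S, k ≤ s + 1 := by
    intro k hk
    by_contra hgt
    push_neg at hgt
    have hall : {i : Fin (s + 1) | extremeRank T i < k} = Set.univ := by
      ext i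
      simp only [Set.mem_setOf_eq, Set.mem_univ, iff_true]
      exact lt_of_le_of_lt (extremeRank_le T i) hgt
    have : count k = s + 1 := by
      simp [hcount, hall, Set.ncard_univ]
    have h2 := hk.2
    omega
  have hbdd : BddAbove S := ⟨s + 1, hSle⟩
  have hkmem : kα ∈ S := hkα ▸ Nat.sSup_mem ⟨1, h1S⟩ hbdd
  have hkmax : ∀ k ∈ S, k ≤ kα := fun k hk => hkα ▸ le_csSup hbdd hk
  have hk1 : 1 ≤ kα := hkmem.1
  have hk2 : kα ≤ s + 1 := hSle kα hkmem
  have hkey : kα < extremeRank T 0 ↔ m < count (extremeRank T 0) := by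
    constructor
    · intro h
      by_contra hle
      push_neg at hle
      have hmem : extremeRank T 0 ∈ S := ⟨one_le_extremeRank T 0, hle⟩
      exact absurd (hkmax _ hmem) (by omega)
    · intro h
      by_contra hle
      push_neg at hle
      exact absurd (le_trans (hmono hle) hkmem.2) (by omega)
  have hLHS : (∀ r : ι, envLow T kα r < T 0 r ∧ T 0 r < envUpp T kα r) ↔ kα < extremeRank T 0 := by
    rw [extremeRank, Finset.lt_inf'_iff]
    constructor
    · intro h r _
      exact (env_iff T r (hinj r) kα hk1 hk2).mp (h r)
    · intro h r
      exact (env_iff T r (hinj r) kα hk1 hk2).mpr (h r (mem_univ r))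
  rw [hLHS, hkey, lt_div_iff₀ hsp, ← hm, Nat.cast_lt]
end

section
/- (Rank envelope test, boundary case.) The observed curve does not exit the global rank envelope strictly but touches it, i.e., T_low^(k_α)(r) ≤ T_1(r) ≤ T_upp^(k_α)(r) for all r ∈ I and T_1(r) = T_low^(k_α)(r) or T_1(r) = T_upp^(k_α)(r) for some r ∈ I, if and only if p_- ≤ α < p_+. -/
open Finset

lemma ncard_setOf_fin {n : ℕ} (p : Fin n → Prop) [DecidablePred p] :
    {x | p x}.ncard = (univ.filter p).card := by
  rw [Set.ncard_eq_toFinset_card']; simp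

/-- Key structural lemma: at each point `r`, there is a rank permutation `σ`. -/
lemma exists_sigma {s : ℕ} {ι : Type*} (T : Fin (s + 1) → ι → ℝ) (r : ι)
    (hnt : ∀ i j : Fin (s + 1), i ≠ j → T i r ≠ T j r) :
    ∃ σ : Fin (s + 1) → Fin (s + 1), Function.Bijective σ ∧
      (∀ i, upRank T i r = (σ i : ℕ) + 1) ∧
      (∀ i, downRank T i r = s + 1 - (σ i : ℕ)) ∧
      (∀ k : ℕ, 1 ≤ k → k ≤ s + 1 → ∀ i,
        (envLow T k r ≤ T i r ↔ k - 1 ≤ (σ i : ℕ)) ∧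
        (T i r = envLow T k r ↔ (σ i : ℕ) = k - 1) ∧
        (T i r ≤ envUpp T k r ↔ (σ i : ℕ) ≤ s + 1 - k) ∧
        (T i r = envUpp T k r ↔ (σ i : ℕ) = s + 1 - k)) := by
  classical
  set F : Finset ℝ := univ.image (fun i => T i r) with hF
  have hinj : Function.Injective (fun i => T i r) := by
    intro i j h
    by_contra hne
    exact hnt i j hne h
  have hcard : F.card = s + 1 := by
    rw [hF, card_image_of_injective _ hinj, card_univ, Fintype.card_fin]
  set e := F.orderEmbOfFin hcard with he
  have hrange : ∀ i : Fin (s + 1), ∃ q, e q = T i r := by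
    intro i
    have hm : T i r ∈ F := mem_image_of_mem _ (mem_univ i)
    have := F.range_orderEmbOfFin hcard
    have : T i r ∈ Set.range e := by rw [this]; exact_mod_cast hm
    exact this
  choose σ hσ using hrange
  have hσinj : Function.Injective σ := by
    intro i j h
    apply hinj
    simp only
    rw [← hσ i, ← hσ j, h]
  have hσbij : Function.Bijective σ := (Finite.injective_iff_bijective).mp hσinj
  have hsort : ∀ (p : ℕ) (hp : p < s + 1),
      ((F.sort (· ≤ ·)).getD p 0) = e ⟨p, hp⟩ := by
    intro p hp
    have hlen : p < (F.sort (· ≤ ·)).length := by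
      rw [Finset.length_sort, hcard]; exact hp
    rw [List.getD_eq_getElem _ _ hlen]
    rfl
  have hvle : ∀ i, (σ i : ℕ) ≤ s := fun i => Nat.lt_succ_iff.mp (σ i).isLt
  refine ⟨σ, hσbij, ?_, ?_, ?_⟩
  · -- upRank
    intro i
    have : upRank T i r = (univ.filter (fun j => σ j ≤ σ i)).card := by
      rw [upRank, ncard_setOf_fin]
      congr 1
      apply filter_congr
      intro j _
      simp only [← hσ i, ← hσ j, e.le_iff_le, eq_iff_iff]
    rw [this]
    have hbij : (univ.filter (fun j => σ j ≤ σ i)).card = (Iic (σ i)).card := by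
      apply card_bij (fun j _ => σ j)
      · intro a ha; simp only [mem_filter] at ha; exact mem_Iic.mpr ha.2
      · intro a _ b _ h; exact hσinj h
      · intro b hb
        obtain ⟨a, ha⟩ := hσbij.2 b
        exact ⟨a, by simp [ha, mem_Iic.mp hb], ha⟩
    rw [hbij, Fin.card_Iic]
  · -- downRank
    intro i
    have : downRank T i r = (univ.filter (fun j => σ i ≤ σ j)).card := by
      rw [downRank, ncard_setOf_fin]
      congr 1
      apply filter_congr
      intro j _
      simp only [← hσ i, ← hσ j, e.le_iff_le, eq_iff_iff]
    rw [this]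
    have hbij : (univ.filter (fun j => σ i ≤ σ j)).card = (Ici (σ i)).card := by
      apply card_bij (fun j _ => σ j)
      · intro a ha; simp only [mem_filter] at ha; exact mem_Ici.mpr ha.2
      · intro a _ b _ h; exact hσinj h
      · intro b hb
        obtain ⟨a, ha⟩ := hσbij.2 b
        exact ⟨a, by simp [ha, mem_Ici.mp hb], ha⟩
    rw [hbij, Fin.card_Ici]
  · -- envelopes
    intro k hk1 hk2 i
    have hlow : envLow T k r = e ⟨k - 1, by omega⟩ := hsort (k - 1) (by omega)
    have hupp : envUpp T k r = e ⟨s + 1 - k, by omega⟩ := hsort (s + 1 - k) (by omega)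
    have hTi : T i r = e (σ i) := (hσ i).symm
    refine ⟨?_, ?_, ?_, ?_⟩
    · rw [hlow, hTi, e.le_iff_le]
      exact Iff.rfl
    · rw [hlow, hTi]
      constructor
      · intro h
        have := e.injective h
        exact congrArg Fin.val this
      · intro h
        congr 1
        exact Fin.ext h
    · rw [hupp, hTi, e.le_iff_le]
      exact Iff.rfl
    · rw [hupp, hTi]
      constructor
      · intro h
        have := e.injective h
        exact congrArg Fin.val this
      · intro h
        congr 1
        exact Fin.ext h

lemma point_lemma {s : ℕ} {ι : Type*} (T : Fin (s + 1) → ι → ℝ) (r : ι)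
    (hnt : ∀ i j : Fin (s + 1), i ≠ j → T i r ≠ T j r)
    (k : ℕ) (hk1 : 1 ≤ k) (hk2 : k ≤ s + 1) (i : Fin (s + 1)) :
    ((envLow T k r ≤ T i r ∧ T i r ≤ envUpp T k r) ↔ k ≤ twoSidedRank T i r) ∧
    (twoSidedRank T i r = k → (T i r = envLow T k r ∨ T i r = envUpp T k r)) ∧
    ((T i r = envLow T k r ∨ T i r = envUpp T k r) → k ≤ twoSidedRank T i r →
      twoSidedRank T i r = k) := by
  obtain ⟨σ, hbij, hup, hdown, henv⟩ := exists_sigma T r hnt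
  obtain ⟨h1, h2, h3, h4⟩ := henv k hk1 hk2 i
  have hv : (σ i : ℕ) ≤ s := Nat.lt_succ_iff.mp (σ i).isLt
  have ht : twoSidedRank T i r = min ((σ i : ℕ) + 1) (s + 1 - (σ i : ℕ)) := by
    rw [twoSidedRank, hup i, hdown i]
  rw [ht, h1, h2, h3, h4]
  refine ⟨?_, ?_, ?_⟩ <;> omega

lemma twoSidedRank_bounds {s : ℕ} {ι : Type*} (T : Fin (s + 1) → ι → ℝ) (r : ι)
    (hnt : ∀ i j : Fin (s + 1), i ≠ j → T i r ≠ T j r) (i : Fin (s + 1)) :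
    1 ≤ twoSidedRank T i r ∧ twoSidedRank T i r ≤ s + 1 := by
  obtain ⟨σ, hbij, hup, hdown, henv⟩ := exists_sigma T r hnt
  have hv : (σ i : ℕ) ≤ s := Nat.lt_succ_iff.mp (σ i).isLt
  rw [twoSidedRank, hup i, hdown i]
  omega

lemma extremeRank_bounds {s : ℕ} {ι : Type*} [Fintype ι] [Nonempty ι]
    (T : Fin (s + 1) → ι → ℝ)
    (hnt : ∀ r : ι, ∀ i j : Fin (s + 1), i ≠ j → T i r ≠ T j r) (i : Fin (s + 1)) :
    1 ≤ extremeRank T i ∧ extremeRank T i ≤ s + 1 := by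
  constructor
  · exact Finset.le_inf' _ _ (fun r _ => (twoSidedRank_bounds T r (hnt r) i).1)
  · obtain ⟨r⟩ := ‹Nonempty ι›
    exact le_trans (Finset.inf'_le _ (mem_univ r)) (twoSidedRank_bounds T r (hnt r) i).2

/-- **Rank envelope test, boundary case.**
The observed curve does not exit the global rank envelope strictly but touches it, i.e.
`T_low^(k_α)(r) ≤ T_1(r) ≤ T_upp^(k_α)(r)` for all `r ∈ I` and `T_1(r) = T_low^(k_α)(r)`
or `T_1(r) = T_upp^(k_α)(r)` for some `r ∈ I`, if and only if `p_- ≤ α < p_+`. -/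
theorem rank_envelope_boundary
    {s : ℕ} (hs : 1 ≤ s) {ι : Type*} [Fintype ι] [Nonempty ι]
    (T : Fin (s + 1) → ι → ℝ)
    (hnoties : ∀ r : ι, ∀ i j : Fin (s + 1), i ≠ j → T i r ≠ T j r)
    (α : ℝ) (hα0 : 0 ≤ α) (hα1 : α < 1)
    (m : ℕ) (hm : (m : ℝ) = α * (s + 1))
    (kα : ℕ)
    (hkα : kα = sSup {k : ℕ | 1 ≤ k ∧ {i : Fin (s + 1) | extremeRank T i < k}.ncard ≤ m}) :
    ((∀ r : ι, envLow T kα r ≤ T 0 r ∧ T 0 r ≤ envUpp T kα r) ∧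
      (∃ r : ι, T 0 r = envLow T kα r ∨ T 0 r = envUpp T kα r)) ↔
      (({i : Fin (s + 1) | extremeRank T i < extremeRank T 0}.ncard : ℝ) / (s + 1) ≤ α ∧
        α < ({i : Fin (s + 1) | extremeRank T i ≤ extremeRank T 0}.ncard : ℝ) / (s + 1)) := by
  classical
  have hspos : (0 : ℝ) < (s : ℝ) + 1 := by positivity
  have hms : m ≤ s := by
    have h1 : (m : ℝ) < (s : ℝ) + 1 := by rw [hm]; nlinarith
    have h2 : (m : ℝ) < ((s + 1 : ℕ) : ℝ) := by push_cast; linarith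
    have := Nat.cast_lt.mp h2
    omega
  set S : Set ℕ := {k : ℕ | 1 ≤ k ∧ {i : Fin (s + 1) | extremeRank T i < k}.ncard ≤ m} with hS
  have h1S : (1 : ℕ) ∈ S := by
    refine ⟨le_refl 1, ?_⟩
    have hemp : {i : Fin (s + 1) | extremeRank T i < 1} = ∅ := by
      ext i
      simp only [Set.mem_setOf_eq, Set.mem_empty_iff_false, iff_false, not_lt]
      exact (extremeRank_bounds T hnoties i).1
    rw [hemp, Set.ncard_empty]
    omega
  have hSub : ∀ k ∈ S, k ≤ s + 1 := by
    intro k hk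
    by_contra hgt
    push_neg at hgt
    have huniv : {i : Fin (s + 1) | extremeRank T i < k} = Set.univ := by
      ext i
      simp only [Set.mem_setOf_eq, Set.mem_univ, iff_true]
      have := (extremeRank_bounds T hnoties i).2
      omega
    have hcard : {i : Fin (s + 1) | extremeRank T i < k}.ncard = s + 1 := by
      rw [huniv, Set.ncard_univ, Nat.card_eq_fintype_card, Fintype.card_fin]
    have := hk.2
    omega
  have hbdd : BddAbove S := ⟨s + 1, hSub⟩
  have hkmem : kα ∈ S := by
    rw [hkα]
    exact Nat.sSup_mem ⟨1, h1S⟩ hbdd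
  have hk1 : 1 ≤ kα := hkmem.1
  have hkle : kα ≤ s + 1 := hSub _ hkmem
  have hnotmem : kα + 1 ∉ S := by
    intro h
    have := le_csSup hbdd h
    rw [← hkα] at this
    omega
  have hsucc : m < {i : Fin (s + 1) | extremeRank T i ≤ kα}.ncard := by
    by_contra hle
    push_neg at hle
    apply hnotmem
    refine ⟨by omega, ?_⟩
    have : {i : Fin (s + 1) | extremeRank T i < kα + 1} =
        {i : Fin (s + 1) | extremeRank T i ≤ kα} := by
      ext i; simp [Nat.lt_succ_iff]
    rw [this]
    exact hle
  -- Main equivalence 1 : LHS ↔ extremeRank T 0 = kα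
  have main1 : ((∀ r : ι, envLow T kα r ≤ T 0 r ∧ T 0 r ≤ envUpp T kα r) ∧
      (∃ r : ι, T 0 r = envLow T kα r ∨ T 0 r = envUpp T kα r)) ↔
      extremeRank T 0 = kα := by
    constructor
    · rintro ⟨hcont, r0, htouch⟩
      have hle : kα ≤ extremeRank T 0 :=
        Finset.le_inf' _ _ (fun r _ =>
          ((point_lemma T r (hnoties r) kα hk1 hkle 0).1).mp (hcont r))
      have hkr : kα ≤ twoSidedRank T 0 r0 :=
        ((point_lemma T r0 (hnoties r0) kα hk1 hkle 0).1).mp (hcont r0)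
      have heq := (point_lemma T r0 (hnoties r0) kα hk1 hkle 0).2.2 htouch hkr
      have hge : extremeRank T 0 ≤ kα := by
        calc extremeRank T 0 ≤ twoSidedRank T 0 r0 := Finset.inf'_le _ (mem_univ r0)
          _ = kα := heq
      omega
    · intro hR
      have hallr : ∀ r : ι, kα ≤ twoSidedRank T 0 r := by
        intro r
        rw [← hR]
        exact Finset.inf'_le _ (mem_univ r)
      have hcont : ∀ r : ι, envLow T kα r ≤ T 0 r ∧ T 0 r ≤ envUpp T kα r := fun r =>
        ((point_lemma T r (hnoties r) kα hk1 hkle 0).1).mpr (hallr r)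
      obtain ⟨r0, _, hr0⟩ := Finset.exists_mem_eq_inf' (univ_nonempty (α := ι))
        (fun r => twoSidedRank T 0 r)
      have heq : twoSidedRank T 0 r0 = kα := by
        rw [← hr0]
        exact hR
      exact ⟨hcont, r0, (point_lemma T r0 (hnoties r0) kα hk1 hkle 0).2.1 heq⟩
  -- Main equivalence 2 : extremeRank T 0 = kα ↔ counting inequalities (naturals)
  have main2 : extremeRank T 0 = kα ↔
      ({i : Fin (s + 1) | extremeRank T i < extremeRank T 0}.ncard ≤ m ∧
        m < {i : Fin (s + 1) | extremeRank T i ≤ extremeRank T 0}.ncard) := by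
    constructor
    · intro h
      rw [h]
      exact ⟨hkmem.2, hsucc⟩
    · rintro ⟨ha, hb⟩
      have hmem0 : extremeRank T 0 ∈ S := ⟨(extremeRank_bounds T hnoties 0).1, ha⟩
      have hle : extremeRank T 0 ≤ kα := by
        rw [hkα]
        exact le_csSup hbdd hmem0
      by_contra hne
      have hlt : extremeRank T 0 < kα := lt_of_le_of_ne hle hne
      have hsub : {i : Fin (s + 1) | extremeRank T i ≤ extremeRank T 0} ⊆
          {i : Fin (s + 1) | extremeRank T i < kα} := by
        intro i hi
        simp only [Set.mem_setOf_eq] at *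
        omega
      have := Set.ncard_le_ncard hsub (Set.toFinite _)
      have := hkmem.2
      omega
  -- Cast lemmas
  have hcast1 : ∀ c : ℕ, ((c : ℝ) / ((s : ℝ) + 1) ≤ α ↔ c ≤ m) := by
    intro c
    rw [div_le_iff₀ hspos, ← hm]
    exact_mod_cast Iff.rfl
  have hcast2 : ∀ c : ℕ, (α < (c : ℝ) / ((s : ℝ) + 1) ↔ m < c) := by
    intro c
    rw [lt_div_iff₀ hspos, ← hm]
    exact_mod_cast Iff.rfl
  rw [main1, main2]
  constructor
  · rintro ⟨h1, h2⟩
    exact ⟨(hcast1 _).mpr h1, (hcast2 _).mpr h2⟩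
  · rintro ⟨h1, h2⟩
    exact ⟨(hcast1 _).mp h1, (hcast2 _).mp h2⟩
end

section
/- (Equivalence of the studentized MAD deviation test and the studentized MAD envelope test.) Let s ≥ 1, let I be a nonempty finite set, let T_1, …, T_{s+1} : I → ℝ, let T_0 : I → ℝ, and let σ : I → ℝ with σ(r) > 0 for all r. Define the studentized maximum absolute deviations u_i = max_{r ∈ I} |T_i(r) − T_0(r)|/σ(r), assume u_1, …, u_{s+1} are pairwise distinct, let m be an integer with 1 ≤ m ≤ s+1, and let u_α be the m-th largest value among u_1, …, u_{s+1}. Then #{i ∈ {1, …, s+1} : u_i ≥ u_1} ≤ m if and only if there exists r ∈ I with T_1(r) ≤ T_0(r) − u_α·σ(r) or T_1(r) ≥ T_0(r) + u_α·σ(r); i.e., the deviation test based on u rejects exactly when the observed curve exits the studentized envelope with bounds T_0(r) ± u_α·σ(r). -/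
open Finset

lemma sort_filter_ge (A : Finset ℝ) (k : ℕ) (hk : k < A.card) :
    (A.filter (fun x => (A.sort (· ≤ ·)).getD k 0 ≤ x)).card = A.card - k := by
  set l := A.sort (· ≤ ·) with hl
  have hlen : l.length = A.card := Finset.length_sort _
  have hk' : k < l.length := hlen ▸ hk
  have hsorted : l.SortedLT := Finset.sortedLT_sort A
  have hmono : StrictMono l.get := hsorted.strictMono_get
  set c := l.getD k 0 with hcdef
  have hc : c = l[k] := List.getD_eq_getElem l 0 hk'
  have hfilter : l.filter (fun x => decide (c ≤ x)) = l.drop k := by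
    conv_lhs => rw [← List.take_append_drop k l]
    rw [List.filter_append]
    have h1 : (l.take k).filter (fun x => decide (c ≤ x)) = [] := by
      rw [List.filter_eq_nil_iff]
      intro a ha
      obtain ⟨i, hi, rfl⟩ := List.mem_iff_getElem.1 ha
      have hik : i < k := lt_of_lt_of_le hi (by simp)
      have hi' : i < l.length := lt_trans hik hk'
      rw [List.getElem_take]
      have h3 : l.get ⟨i, hi'⟩ < l.get ⟨k, hk'⟩ := hmono (by simpa using hik)
      simp only [List.get_eq_getElem] at h3
      rw [hc]
      simpa using not_le.2 h3
    have h2 : (l.drop k).filter (fun x => decide (c ≤ x)) = l.drop k := by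
      rw [List.filter_eq_self]
      intro a ha
      obtain ⟨i, hi, rfl⟩ := List.mem_iff_getElem.1 ha
      rw [List.getElem_drop]
      have hki : k + i < l.length := by
        rw [List.length_drop] at hi; omega
      have h3 : l.get ⟨k, hk'⟩ ≤ l.get ⟨k + i, hki⟩ := hmono.monotone (by simp)
      simp only [List.get_eq_getElem] at h3
      rw [hc]
      simpa using h3
    rw [h1, h2, List.nil_append]
  have hcard : (A.filter (fun x => c ≤ x)).card
      = (l.filter (fun x => decide (c ≤ x))).length := by
    have : (A.filter (fun x => c ≤ x)).val = (l.filter (fun x => decide (c ≤ x)) : Multiset ℝ) := by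
      rw [Finset.filter_val, ← Finset.sort_eq A (· ≤ ·), ← hl]
      simp [Multiset.filter_coe]
    have h4 := congrArg Multiset.card this
    exact h4
  rw [hcard, hfilter, List.length_drop, hlen]

/-- **Equivalence of the studentized MAD deviation test and the studentized MAD
envelope test.** Let `s ≥ 1`, `I` a nonempty finite set, `T_1, …, T_{s+1} : I → ℝ`,
`T_0 : I → ℝ`, and `σ : I → ℝ` with `σ(r) > 0` for all `r`. Define the studentized
maximum absolute deviations `u_i = max_{r ∈ I} |T_i(r) − T_0(r)|/σ(r)`, assume the `u_i`
are pairwise distinct, let `1 ≤ m ≤ s+1` and let `u_α` be the `m`-th largest value among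
`u_1, …, u_{s+1}`. Then `#{i : u_i ≥ u_1} ≤ m` iff there exists `r ∈ I` with
`T_1(r) ≤ T_0(r) − u_α·σ(r)` or `T_1(r) ≥ T_0(r) + u_α·σ(r)`. -/
theorem studentized_MAD_deviation_iff_envelope
    {s : ℕ} (hs : 1 ≤ s) {ι : Type*} [Fintype ι] [Nonempty ι]
    (T : Fin (s + 1) → ι → ℝ) (T₀ : ι → ℝ) (σ : ι → ℝ) (hσ : ∀ r, 0 < σ r)
    (u : Fin (s + 1) → ℝ)
    (hu : ∀ i, u i = univ.sup' univ_nonempty (fun r => |T i r - T₀ r| / σ r))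
    (hdistinct : ∀ i j : Fin (s + 1), i ≠ j → u i ≠ u j)
    (m : ℕ) (hm1 : 1 ≤ m) (hm2 : m ≤ s + 1)
    (uα : ℝ) (huα : uα = ((univ.image u).sort (· ≤ ·)).getD (s + 1 - m) 0) :
    {i : Fin (s + 1) | u 0 ≤ u i}.ncard ≤ m ↔
      ∃ r : ι, T 0 r ≤ T₀ r - uα * σ r ∨ T₀ r + uα * σ r ≤ T 0 r := by
  have huinj : Function.Injective u := by
    intro i j h
    by_contra hne
    exact hdistinct i j hne h
  set A : Finset ℝ := univ.image u with hAdef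
  have hA : A.card = s + 1 := by
    rw [hAdef, Finset.card_image_of_injective _ huinj, Finset.card_univ, Fintype.card_fin]
  have hk : s + 1 - m < A.card := by omega
  -- the count with threshold uα is exactly m
  have hfi : A.filter (fun x => uα ≤ x) = (univ.filter (fun i => uα ≤ u i)).image u := by
    rw [hAdef, Finset.filter_image]
  have hαcard : (univ.filter (fun i => uα ≤ u i)).card = m := by
    have h1 : (A.filter (fun x => uα ≤ x)).card = A.card - (s + 1 - m) := by
      rw [huα]; exact sort_filter_ge A _ hk
    rw [hfi, Finset.card_image_of_injective _ huinj] at h1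
    omega
  -- ncard to Finset card
  have hncard : {i : Fin (s + 1) | u 0 ≤ u i}.ncard = (univ.filter (fun i => u 0 ≤ u i)).card := by
    rw [Set.ncard_eq_toFinset_card']
    congr 1
    ext i
    simp
  -- RHS ↔ uα ≤ u 0
  have hRHS : (∃ r : ι, T 0 r ≤ T₀ r - uα * σ r ∨ T₀ r + uα * σ r ≤ T 0 r) ↔ uα ≤ u 0 := by
    rw [hu 0, Finset.le_sup'_iff]
    constructor
    · rintro ⟨r, hr⟩
      refine ⟨r, Finset.mem_univ r, ?_⟩
      rw [le_div_iff₀ (hσ r), le_abs]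
      rcases hr with hr | hr
      · right; linarith
      · left; linarith
    · rintro ⟨r, -, hr⟩
      rw [le_div_iff₀ (hσ r), le_abs] at hr
      refine ⟨r, ?_⟩
      rcases hr with hr | hr
      · right; linarith
      · left; linarith
  rw [hncard, hRHS]
  constructor
  · intro h
    by_contra hlt
    push_neg at hlt
    have hsub : insert (0 : Fin (s + 1)) (univ.filter (fun i => uα ≤ u i))
        ⊆ univ.filter (fun i => u 0 ≤ u i) := by
      intro i hi
      rcases Finset.mem_insert.1 hi with rfl | hi
      · simp
      · rw [Finset.mem_filter] at hi ⊢
        exact ⟨hi.1, le_trans (le_of_lt hlt) hi.2⟩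
    have h0 : (0 : Fin (s + 1)) ∉ univ.filter (fun i => uα ≤ u i) := by
      simp [not_le.2 hlt]
    have := Finset.card_le_card hsub
    rw [Finset.card_insert_of_notMem h0, hαcard] at this
    omega
  · intro h
    have hsub : univ.filter (fun i => u 0 ≤ u i) ⊆ univ.filter (fun i => uα ≤ u i) := by
      intro i hi
      rw [Finset.mem_filter] at hi ⊢
      exact ⟨hi.1, le_trans h hi.2⟩
    have := Finset.card_le_card hsub
    omega
end

section
/- (Equivalence of the directional quantile MAD deviation test and the directional quantile MAD envelope test.) Let s ≥ 1, let I be a nonempty finite set, let T_1, …, T_{s+1} : I → ℝ, let T_0 : I → ℝ, and let a, b : I → ℝ with a(r) > 0 and b(r) > 0 for all r. Define the directional quantile deviations u_i = max_{r ∈ I} d_i(r), where d_i(r) = (T_i(r) − T_0(r))/a(r) if T_i(r) ≥ T_0(r) and d_i(r) = (T_0(r) − T_i(r))/b(r) if T_i(r) < T_0(r) (so d_i(r) ≥ 0 and the deviation is scaled by the upper quantile distance above T_0 and by the lower quantile distance below T_0). Assume u_1, …, u_{s+1} are pairwise distinct, let m be an integer with 1 ≤ m ≤ s+1, and let u_α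 be the m-th largest value among u_1, …, u_{s+1}. Then #{i ∈ {1, …, s+1} : u_i ≥ u_1} ≤ m if and only if there exists r ∈ I with T_1(r) ≤ T_0(r) − u_α·b(r) or T_1(r) ≥ T_0(r) + u_α·a(r); i.e., the deviation test based on u rejects exactly when the observed curve exits the directional quantile envelope with lower bound T_0(r) − u_α·b(r) and upper bound T_0(r) + u_α·a(r). -/
open Finset

/-- **Equivalence of the directional quantile MAD deviation test and the directional
quantile MAD envelope test.** Let `s ≥ 1`, `I` a nonempty finite set,
`T_1, …, T_{s+1} : I → ℝ`, `T_0 : I → ℝ` and `a, b : I → ℝ` with `a(r), b(r) > 0`.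
Define the directional quantile deviations `u_i = max_{r ∈ I} d_i(r)` where
`d_i(r) = (T_i(r) − T_0(r))/a(r)` if `T_i(r) ≥ T_0(r)` and
`d_i(r) = (T_0(r) − T_i(r))/b(r)` if `T_i(r) < T_0(r)`. Assume the `u_i` are pairwise
distinct, let `1 ≤ m ≤ s+1` and let `u_α` be the `m`-th largest value among
`u_1, …, u_{s+1}`. Then `#{i : u_i ≥ u_1} ≤ m` iff there exists `r ∈ I` with
`T_1(r) ≤ T_0(r) − u_α·b(r)` or `T_1(r) ≥ T_0(r) + u_α·a(r)`. -/
theorem directional_quantile_MAD_deviation_iff_envelope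
    {s : ℕ} (hs : 1 ≤ s) {ι : Type*} [Fintype ι] [Nonempty ι]
    (T : Fin (s + 1) → ι → ℝ) (T₀ : ι → ℝ) (a b : ι → ℝ)
    (ha : ∀ r, 0 < a r) (hb : ∀ r, 0 < b r)
    (d : Fin (s + 1) → ι → ℝ)
    (hd : ∀ i r, d i r =
      if T₀ r ≤ T i r then (T i r - T₀ r) / a r else (T₀ r - T i r) / b r)
    (u : Fin (s + 1) → ℝ)
    (hu : ∀ i, u i = univ.sup' univ_nonempty (fun r => d i r))
    (hdistinct : ∀ i j : Fin (s + 1), i ≠ j → u i ≠ u j)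
    (m : ℕ) (hm1 : 1 ≤ m) (hm2 : m ≤ s + 1)
    (uα : ℝ) (huα : uα = ((univ.image u).sort (· ≤ ·)).getD (s + 1 - m) 0) :
    {i : Fin (s + 1) | u 0 ≤ u i}.ncard ≤ m ↔
      ∃ r : ι, T 0 r ≤ T₀ r - uα * b r ∨ T₀ r + uα * a r ≤ T 0 r := by
  -- basic facts
  have hinj : Function.Injective u := by
    intro i j h
    by_contra h'
    exact hdistinct i j h' h
  set S : Finset ℝ := univ.image u with hSdef
  have hS : S.card = s + 1 := by
    rw [hSdef, card_image_of_injective _ hinj, card_univ, Fintype.card_fin]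
  set e := S.orderEmbOfFin hS with hedef
  have hk : s + 1 - m < s + 1 := by omega
  have hlen : s + 1 - m < (S.sort (· ≤ ·)).length := by
    rw [Finset.length_sort, hS]; exact hk
  have huα' : uα = e ⟨s + 1 - m, hk⟩ := by
    rw [huα, Finset.orderEmbOfFin_apply, List.getD_eq_getElem _ _ hlen]
    simp [Fin.getElem_fin]
  -- nonnegativity of d
  have hdnn : ∀ i r, 0 ≤ d i r := by
    intro i r
    rw [hd]
    split_ifs with h
    · exact div_nonneg (by linarith) (ha r).le
    · exact div_nonneg (by linarith) (hb r).le
  -- nonnegativity of uα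
  have huα_mem : uα ∈ S := by rw [huα']; exact Finset.orderEmbOfFin_mem _ _ _
  have huα_nn : 0 ≤ uα := by
    rw [hSdef] at huα_mem
    obtain ⟨i, -, hi⟩ := Finset.mem_image.1 huα_mem
    subst hi
    obtain ⟨r⟩ := ‹Nonempty ι›
    calc (0:ℝ) ≤ d i r := hdnn i r
    _ ≤ u i := by rw [hu]; exact Finset.le_sup' _ (mem_univ r)
  -- pointwise equivalence between deviation and envelope exit
  have hpt : ∀ r, (T 0 r ≤ T₀ r - uα * b r ∨ T₀ r + uα * a r ≤ T 0 r) ↔ uα ≤ d 0 r := by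
    intro r
    rw [hd]
    split_ifs with h
    · constructor
      · rintro (h1 | h2)
        · have hb' := hb r
          have huz : uα = 0 := by nlinarith
          rw [huz]
          exact div_nonneg (by linarith) (ha r).le
        · rw [le_div_iff₀ (ha r)]; linarith
      · intro h1
        rw [le_div_iff₀ (ha r)] at h1
        right; linarith
    · push_neg at h
      constructor
      · rintro (h1 | h2)
        · rw [le_div_iff₀ (hb r)]; linarith
        · exfalso; nlinarith [ha r]
      · intro h1
        rw [le_div_iff₀ (hb r)] at h1
        left; linarith
  -- the RHS is equivalent to uα ≤ u 0
  have hrhs : (∃ r : ι, T 0 r ≤ T₀ r - uα * b r ∨ T₀ r + uα * a r ≤ T 0 r) ↔ uα ≤ u 0 := by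
    rw [hu, Finset.le_sup'_iff]
    constructor
    · rintro ⟨r, hr⟩; exact ⟨r, mem_univ r, (hpt r).1 hr⟩
    · rintro ⟨r, -, hr⟩; exact ⟨r, (hpt r).2 hr⟩
  -- rank function
  have hrange : ∀ i, ∃ j, e j = u i := by
    intro i
    have : u i ∈ Set.range e := by
      rw [hedef, Finset.range_orderEmbOfFin, hSdef]
      exact Finset.mem_image_of_mem u (mem_univ i)
    exact this
  choose σ hσ using hrange
  -- counting
  have hcount : {i : Fin (s + 1) | u 0 ≤ u i}.ncard = s + 1 - (σ 0 : ℕ) := by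
    have h1 : {i : Fin (s + 1) | u 0 ≤ u i} =
        ↑(univ.filter fun i : Fin (s + 1) => u 0 ≤ u i) := by
      ext i; simp
    rw [h1, Set.ncard_coe_finset]
    have h2 : (univ.filter fun i : Fin (s + 1) => u 0 ≤ u i).card
        = (Finset.Ici (σ 0)).card := by
      apply Finset.card_bij (fun i _ => σ i)
      · intro i hi
        simp only [Finset.mem_filter, Finset.mem_univ, true_and] at hi
        rw [Finset.mem_Ici, ← e.le_iff_le, hσ, hσ]
        exact hi
      · intro i _ j _ hij
        apply hinj
        rw [← hσ, ← hσ, hij]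
      · intro j hj
        rw [Finset.mem_Ici] at hj
        have : (e j : ℝ) ∈ (S : Set ℝ) := by
          rw [← Finset.range_orderEmbOfFin S hS]
          exact Set.mem_range_self j
        rw [Finset.mem_coe, hSdef] at this
        obtain ⟨i, -, hi⟩ := Finset.mem_image.1 this
        refine ⟨i, ?_, ?_⟩
        · simp only [Finset.mem_filter, Finset.mem_univ, true_and]
          calc u 0 = e (σ 0) := (hσ 0).symm
          _ ≤ e j := e.monotone hj
          _ = u i := hi.symm
        · apply e.injective
          rw [hσ, hi]
    rw [h2, Fin.card_Ici]
  -- conclusion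
  rw [hcount, hrhs, huα']
  have hσ0 : (σ 0 : ℕ) < s + 1 := (σ 0).2
  rw [← hσ 0, e.le_iff_le]
  constructor
  · intro h
    exact Fin.mk_le_of_le_val (by omega)
  · intro h
    have : s + 1 - m ≤ (σ 0 : ℕ) := h
    omega
end

section
/- (The rank count test and the conservative rank envelope test can differ only at the critical rank.) Let α with 0 ≤ α < 1 be such that m = α(s+1) is an integer, and let k_α = max{k ≥ 1 : #{i : R_i < k} ≤ m}, which is well defined since α < 1. If #{i ∈ {1, …, s+1} : N_i ≼ N_1} ≤ m (the rank count test rejects) but #{i ∈ {1, …, s+1} : R_i ≤ R_1} > m (the conservative rank envelope test does not reject), then R_1 = k_α, where N_i ≼ N_1 means ¬(N_1 ≺ N_i). -/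
open Finset

/-- The rank count `N_{i,k} = #{r ∈ I : R_i^*(r) = k}`. -/
noncomputable def rankCount {s : ℕ} {ι : Type*} [Fintype ι]
    (T : Fin (s + 1) → ι → ℝ) (i : Fin (s + 1)) (k : ℕ) : ℕ :=
  {r : ι | twoSidedRank T i r = k}.ncard

/-- The reverse lexical strict order on rank count vectors
`N_i = (N_{i,1}, …, N_{i,K})`, `K = ⌊(s+2)/2⌋`: `N_i ≺ N_j` iff there exists `n ≤ K`
with `N_{i,k} = N_{j,k}` for all `k < n` and `N_{i,n} > N_{j,n}`. -/
def rankCountLT {s : ℕ} {ι : Type*} [Fintype ι]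
    (T : Fin (s + 1) → ι → ℝ) (i j : Fin (s + 1)) : Prop :=
  ∃ n : ℕ, 1 ≤ n ∧ n ≤ (s + 2) / 2 ∧
    (∀ k, 1 ≤ k → k < n → rankCount T i k = rankCount T j k) ∧
    rankCount T j n < rankCount T i n

lemma one_le_twoSidedRank {s : ℕ} {ι : Type*} (T : Fin (s + 1) → ι → ℝ)
    (i : Fin (s + 1)) (r : ι) : 1 ≤ twoSidedRank T i r := by
  have h1 : 0 < ({j : Fin (s + 1) | T j r ≤ T i r}).ncard :=
    (Set.ncard_pos (Set.toFinite _)).mpr ⟨i, by simp⟩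
  have h2 : 0 < ({j : Fin (s + 1) | T i r ≤ T j r}).ncard :=
    (Set.ncard_pos (Set.toFinite _)).mpr ⟨i, by simp⟩
  simp only [twoSidedRank, upRank, downRank, le_min_iff]
  omega

/-- **The rank count test and the conservative rank envelope test can differ only
at the critical rank.** Let `0 ≤ α < 1` be such that `m = α(s+1)` is an integer and let
`k_α = max{k ≥ 1 : #{i : R_i < k} ≤ m}`. If `#{i : N_i ≼ N_1} ≤ m` (the rank count test
rejects) but `#{i : R_i ≤ R_1} > m` (the conservative rank envelope test does not
reject), then `R_1 = k_α`, where `N_i ≼ N_1` means `¬(N_1 ≺ N_i)`. -/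
theorem rankCount_envelope_differ_only_at_critical
    {s : ℕ} (hs : 1 ≤ s) {ι : Type*} [Fintype ι] [Nonempty ι]
    (T : Fin (s + 1) → ι → ℝ)
    (hnoties : ∀ r : ι, ∀ i j : Fin (s + 1), i ≠ j → T i r ≠ T j r)
    (α : ℝ) (hα0 : 0 ≤ α) (hα1 : α < 1)
    (m : ℕ) (hm : (m : ℝ) = α * (s + 1))
    (kα : ℕ)
    (hkα : kα = sSup {k : ℕ | 1 ≤ k ∧ {i : Fin (s + 1) | extremeRank T i < k}.ncard ≤ m})
    (hN : {i : Fin (s + 1) | ¬ rankCountLT T 0 i}.ncard ≤ m)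
    (hR : m < {i : Fin (s + 1) | extremeRank T i ≤ extremeRank T 0}.ncard) :
    extremeRank T 0 = kα := by
  classical
  set R : Fin (s + 1) → ℕ := extremeRank T with hRdef
  have hms : m ≤ s := by
    have hlt : (m : ℝ) < ((s : ℝ) + 1) := by
      rw [hm]
      have : (0:ℝ) < (s:ℝ) + 1 := by positivity
      nlinarith
    have : (m : ℝ) < ((s + 1 : ℕ) : ℝ) := by push_cast; linarith
    have := Nat.cast_lt.mp this
    omega
  have hone : ∀ i, 1 ≤ R i := by
    intro i
    rw [hRdef]
    apply Finset.le_inf'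
    intro r _
    exact one_le_twoSidedRank T i r
  have hcnt : ∀ i k, 0 < rankCount T i k → R i ≤ k := by
    intro i k h
    rw [rankCount, Set.ncard_pos] at h
    obtain ⟨r, hr⟩ := h
    calc R i ≤ twoSidedRank T i r := Finset.inf'_le _ (mem_univ r)
      _ = k := hr
  have hattain : ∀ i, 0 < rankCount T i (R i) := by
    intro i
    obtain ⟨r, _, hr⟩ := exists_mem_eq_inf' (univ_nonempty) (fun r => twoSidedRank T i r)
    rw [rankCount, Set.ncard_pos]
    exact ⟨r, hr.symm⟩
  have hsub : {i : Fin (s + 1) | R i < R 0} ⊆ {i : Fin (s + 1) | ¬ rankCountLT T 0 i} := by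
    intro i hi
    simp only [Set.mem_setOf_eq] at hi ⊢
    rintro ⟨n, hn1, hnK, heq, hlt⟩
    rcases lt_or_ge (R i) n with h | h
    · have h0 : 0 < rankCount T 0 (R i) := by
        rw [heq (R i) (hone i) h]; exact hattain i
      exact absurd (hcnt 0 _ h0) (by omega)
    · have h0 : 0 < rankCount T 0 n := by
        have := hlt; omega
      exact absurd (hcnt 0 n h0) (by omega)
  -- the counting function
  set cnt : ℕ → ℕ := fun k => ({i : Fin (s + 1) | R i < k}).ncard with hcntdef
  have hmono : ∀ k k', k ≤ k' → cnt k ≤ cnt k' := by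
    intro k k' hkk
    apply Set.ncard_le_ncard
    · intro i hi; simp only [Set.mem_setOf_eq] at hi ⊢; omega
    · exact Set.toFinite _
  set S : Set ℕ := {k : ℕ | 1 ≤ k ∧ cnt k ≤ m} with hSdef
  have h1S : 1 ∈ S := by
    constructor
    · exact le_refl 1
    · have : ({i : Fin (s + 1) | R i < 1}) = ∅ := by
        ext i; simp only [Set.mem_setOf_eq, Set.mem_empty_iff_false, iff_false, not_lt]
        exact hone i
      show ({i : Fin (s + 1) | R i < 1}).ncard ≤ m
      rw [this]
      simp
  have hbdd : BddAbove S := by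
    refine ⟨Finset.univ.sup R, ?_⟩
    intro k hk
    obtain ⟨-, hk2⟩ := hk
    by_contra hc
    push_neg at hc
    have hall : ∀ i : Fin (s + 1), R i < k := by
      intro i
      calc R i ≤ Finset.univ.sup R := Finset.le_sup (mem_univ i)
        _ < k := hc
    have : ({i : Fin (s + 1) | R i < k}) = Set.univ := by
      ext i; simp [hall i]
    rw [hcntdef] at hk2
    simp only [this, Set.ncard_univ, Nat.card_eq_fintype_card, Fintype.card_fin] at hk2
    omega
  have hR0S : R 0 ∈ S := by
    refine ⟨hone 0, ?_⟩
    calc cnt (R 0) ≤ ({i : Fin (s + 1) | ¬ rankCountLT T 0 i}).ncard :=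
          Set.ncard_le_ncard hsub (Set.toFinite _)
      _ ≤ m := hN
  have hkαS : kα ∈ S := by
    rw [hkα]; exact Nat.sSup_mem ⟨1, h1S⟩ hbdd
  have hle : R 0 ≤ kα := by
    rw [hkα]; exact le_csSup hbdd hR0S
  have hge : kα ≤ R 0 := by
    by_contra hc
    push_neg at hc
    have hmono' : cnt (R 0 + 1) ≤ cnt kα := hmono _ _ (by omega)
    have heq : ({i : Fin (s + 1) | R i < R 0 + 1}) =
        ({i : Fin (s + 1) | R i ≤ R 0}) := by
      ext i; simp [Nat.lt_succ_iff]
    have : m < cnt (R 0 + 1) := by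
      rw [hcntdef]; simp only []; rw [heq]; exact hR
    have := hkαS.2
    omega
  omega
end

section
/- (Bound on the number of curves sharing a given extreme rank.) For every integer k ≥ 1, the number of curves attaining extreme rank exactly k satisfies #{i ∈ {1, …, s+1} : R_i = k} ≤ 2·|I|, where |I| is the number of points in I. -/
open Finset

lemma upRank_lt {s : ℕ} {ι : Type*} (T : Fin (s + 1) → ι → ℝ) {i j : Fin (s + 1)} {r : ι}
    (h : T i r < T j r) : upRank T i r < upRank T j r := by
  apply Set.ncard_lt_ncard _ (Set.toFinite _)
  constructor
  · exact fun x hx => le_trans hx h.le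
  · intro hsub
    have := hsub (le_refl (T j r))
    exact absurd this (not_le.mpr h)

lemma downRank_lt {s : ℕ} {ι : Type*} (T : Fin (s + 1) → ι → ℝ) {i j : Fin (s + 1)} {r : ι}
    (h : T i r < T j r) : downRank T j r < downRank T i r := by
  apply Set.ncard_lt_ncard _ (Set.toFinite _)
  constructor
  · exact fun x hx => le_trans h.le hx
  · intro hsub
    have := hsub (le_refl (T i r))
    exact absurd this (not_le.mpr h)

lemma upRank_inj {s : ℕ} {ι : Type*} (T : Fin (s + 1) → ι → ℝ) (r : ι)
    (h : ∀ i j : Fin (s + 1), i ≠ j → T i r ≠ T j r) :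
    Function.Injective (fun i => upRank T i r) := by
  intro i j hij
  by_contra hne
  rcases lt_trichotomy (T i r) (T j r) with h1 | h1 | h1
  · exact absurd hij (upRank_lt T h1).ne
  · exact h i j hne h1
  · exact absurd hij.symm (upRank_lt T h1).ne

lemma downRank_inj {s : ℕ} {ι : Type*} (T : Fin (s + 1) → ι → ℝ) (r : ι)
    (h : ∀ i j : Fin (s + 1), i ≠ j → T i r ≠ T j r) :
    Function.Injective (fun i => downRank T i r) := by
  intro i j hij
  by_contra hne
  rcases lt_trichotomy (T i r) (T j r) with h1 | h1 | h1
  · exact absurd hij.symm (downRank_lt T h1).ne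
  · exact h i j hne h1
  · exact absurd hij (downRank_lt T h1).ne

/-- **Bound on the number of curves sharing a given extreme rank.**
For every integer `k ≥ 1`, the number of curves attaining extreme rank exactly `k`
satisfies `#{i : R_i = k} ≤ 2·|I|`. -/
theorem card_extremeRank_eq_le
    {s : ℕ} (hs : 1 ≤ s) {ι : Type*} [Fintype ι] [Nonempty ι]
    (T : Fin (s + 1) → ι → ℝ)
    (hnoties : ∀ r : ι, ∀ i j : Fin (s + 1), i ≠ j → T i r ≠ T j r)
    (k : ℕ) (hk : 1 ≤ k) :
    {i : Fin (s + 1) | extremeRank T i = k}.ncard ≤ 2 * Fintype.card ι := by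
  classical
  have hex : ∀ i : Fin (s + 1), ∃ r : ι, twoSidedRank T i r = extremeRank T i := by
    intro i
    obtain ⟨r, -, hr⟩ := Finset.exists_mem_eq_inf' (univ_nonempty) (twoSidedRank T i)
    exact ⟨r, hr.symm⟩
  choose ρ hρ using hex
  set S : Set (Fin (s + 1)) := {i | extremeRank T i = k} with hS
  set f : Fin (s + 1) → ι × Bool := fun i => (ρ i, decide (upRank T i (ρ i) = k)) with hf
  have hinj : Set.InjOn f S := by
    intro i hi j hj hfij
    have hri : twoSidedRank T i (ρ i) = k := (hρ i).trans hi
    have hrj : twoSidedRank T j (ρ j) = k := (hρ j).trans hj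
    have h1 : ρ i = ρ j := congrArg Prod.fst hfij
    have h2 : (upRank T i (ρ i) = k) ↔ (upRank T j (ρ j) = k) := by
      have := congrArg Prod.snd hfij
      simpa using decide_eq_decide.mp this
    by_cases hup : upRank T i (ρ i) = k
    · have hupj : upRank T j (ρ j) = k := h2.mp hup
      apply upRank_inj T (ρ i) (hnoties (ρ i))
      show upRank T i (ρ i) = upRank T j (ρ i)
      rw [hup, h1, hupj]
    · have hupj : ¬ upRank T j (ρ j) = k := fun h => hup (h2.mpr h)
      have hdi : downRank T i (ρ i) = k := by
        rcases min_cases (upRank T i (ρ i)) (downRank T i (ρ i)) with ⟨he, -⟩ | ⟨he, -⟩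
        · exact absurd (he ▸ hri) hup
        · exact he ▸ hri
      have hdj : downRank T j (ρ j) = k := by
        rcases min_cases (upRank T j (ρ j)) (downRank T j (ρ j)) with ⟨he, -⟩ | ⟨he, -⟩
        · exact absurd (he ▸ hrj) hupj
        · exact he ▸ hrj
      apply downRank_inj T (ρ i) (hnoties (ρ i))
      show downRank T i (ρ i) = downRank T j (ρ i)
      rw [hdi, h1, hdj]
  calc S.ncard = (f '' S).ncard := (Set.ncard_image_of_injOn hinj).symm
    _ ≤ (Set.univ : Set (ι × Bool)).ncard :=
        Set.ncard_le_ncard (Set.subset_univ _) (Set.finite_univ)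
    _ = Fintype.card (ι × Bool) := by rw [Set.ncard_univ, Nat.card_eq_fintype_card]
    _ = 2 * Fintype.card ι := by
        rw [Fintype.card_prod, Fintype.card_bool, Nat.mul_comm]
end
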